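/- arXiv:1309.7160 — 3 statements merged into one kernel-verified Lean document; each statement's English description precedes it below -/
import Mathlib

section
/- For every complex number s with Re(s) ≥ 12, one has |G₂(s) − 1| < (1/2)·(2/3)^{Re(s)/2}. -/
open Complex Real MeasureTheory
open scoped Classical

/-- The order (multiplicity) of a zero of `f` at `z` (junk value `0` if `f` is not
analytic at `z` or vanishes identically near `z`). -/
noncomputable def zeroMult (f : ℂ → ℂ) (z : ℂ) : ℕ :=
  if h : AnalyticAt ℂ f z then (analyticOrderAt f z).toNat else 0

/-- The second derivative of the Riemann zeta function. -/
noncomputable def zeta'' : ℂ → ℂ := iteratedDeriv 2 riemannZeta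

/-- `G₂(s) = 2^s / (log 2)^2 * ζ''(s)`. -/
noncomputable def G₂ (s : ℂ) : ℂ := (2 : ℂ) ^ s / (Real.log 2 : ℂ) ^ 2 * zeta'' s

/-- `F(s) = 2^s · π^(s-1) · sin (π s / 2) · Γ(1 - s)`, the factor in the functional
equation `ζ(s) = F(s) ζ(1-s)`. -/
noncomputable def F (s : ℂ) : ℂ :=
  (2 : ℂ) ^ s * (π : ℂ) ^ (s - 1) * Complex.sin (π * s / 2) * Complex.Gamma (1 - s)

/-- `Li(x) = ∫_2^x dt / log t`. -/
noncomputable def Li (x : ℝ) : ℝ := ∫ t in (2 : ℝ)..x, 1 / Real.log t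

/-- Sum of `g ρ` over the zeros `ρ` of `ζ''` with `T₁ < Im ρ ≤ T₂`,
counted with multiplicity. -/
noncomputable def zeroSum (T₁ T₂ : ℝ) (g : ℂ → ℝ) : ℝ :=
  ∑ᶠ ρ ∈ {ρ : ℂ | zeta'' ρ = 0 ∧ T₁ < ρ.im ∧ ρ.im ≤ T₂}, (zeroMult zeta'' ρ : ℝ) * g ρ

/-- `N₂(T)`: the number of zeros of `ζ''` with `0 < Im ρ ≤ T`, counted with
multiplicity. -/
noncomputable def N₂ (T : ℝ) : ℕ :=
  ∑ᶠ ρ ∈ {ρ : ℂ | zeta'' ρ = 0 ∧ 0 < ρ.im ∧ ρ.im ≤ T}, zeroMult zeta'' ρ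

/-- The branch of `arg f` along the horizontal line `Im s = T`, obtained by continuous
variation from the limit `0` as `Re s → ∞`: it is given by
`arg f (σ + iT) = - Im ∫_σ^∞ (f'/f)(u + iT) du`. -/
noncomputable def argAlong (f : ℂ → ℂ) (T σ : ℝ) : ℝ :=
  - ∫ u in Set.Ioi σ, (deriv f (u + T * Complex.I) / f (u + T * Complex.I)).im

/-- majorant -/
noncomputable def mb (n : ℕ) : ℝ :=
  if n ≤ 2 then 0
  else (if n ≤ 4 then 4 else if n ≤ 8 then 9 else if n ≤ 16 then 16 else (n:ℝ)^2) * 64 / (n:ℝ)^6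

lemma mb_nonneg (n : ℕ) : 0 ≤ mb n := by
  unfold mb; split_ifs <;> positivity

lemma mb_le (n : ℕ) : mb n ≤ 64 / (n:ℝ)^4 := by
  unfold mb
  split_ifs with h1 h2 h3 h4
  · rcases Nat.lt_or_ge n 1 with h | h
    · interval_cases n; simp
    · positivity
  · have hn : (3:ℝ) ≤ (n:ℝ) := by exact_mod_cast (by omega : 3 ≤ n)
    have hn0 : (0:ℝ) < (n:ℝ) := by linarith
    rw [div_le_div_iff₀ (by positivity) (by positivity)]
    nlinarith [mul_le_mul_of_nonneg_right (show (4:ℝ) ≤ (n:ℝ)^2 by nlinarith)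
      (pow_nonneg hn0.le 4)]
  · have hn : (5:ℝ) ≤ (n:ℝ) := by exact_mod_cast (by omega : 5 ≤ n)
    have hn0 : (0:ℝ) < (n:ℝ) := by linarith
    rw [div_le_div_iff₀ (by positivity) (by positivity)]
    nlinarith [mul_le_mul_of_nonneg_right (show (9:ℝ) ≤ (n:ℝ)^2 by nlinarith)
      (pow_nonneg hn0.le 4)]
  · have hn : (9:ℝ) ≤ (n:ℝ) := by exact_mod_cast (by omega : 9 ≤ n)
    have hn0 : (0:ℝ) < (n:ℝ) := by linarith
    rw [div_le_div_iff₀ (by positivity) (by positivity)]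
    nlinarith [mul_le_mul_of_nonneg_right (show (16:ℝ) ≤ (n:ℝ)^2 by nlinarith)
      (pow_nonneg hn0.le 4)]
  · have hn : (17:ℝ) ≤ (n:ℝ) := by exact_mod_cast (by omega : 17 ≤ n)
    have hn0 : (0:ℝ) < (n:ℝ) := by linarith
    rw [div_le_div_iff₀ (by positivity) (by positivity)]
    nlinarith [pow_nonneg hn0.le 4]

lemma summable_mb : Summable mb := by
  refine Summable.of_nonneg_of_le mb_nonneg mb_le ?_
  simpa [div_eq_mul_inv] using (summable_one_div_nat_pow.mpr (by norm_num : 1 < 4)).mul_left 64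

lemma tail_le : ∑' k : ℕ, mb (k + 17) ≤ 1 / 192 := by
  have hval : ∀ k : ℕ, mb (k + 17) = 64 / ((k:ℝ) + 17)^4 := by
    intro k
    unfold mb
    rw [if_neg (by omega), if_neg (by omega), if_neg (by omega), if_neg (by omega)]
    push_cast
    have h : ((k:ℝ) + 17) ≠ 0 := by positivity
    field_simp
  calc ∑' k : ℕ, mb (k + 17) ≤ 1/192 := by
        refine Real.tsum_le_of_sum_range_le (fun k => mb_nonneg _) (fun N => ?_)
        have key : ∀ k : ℕ, mb (k + 17) ≤
            64 / (3 * ((k:ℝ) + 16)^3) - 64 / (3 * ((k:ℝ) + 17)^3) := by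
          intro k
          rw [hval k]
          have hx : (0:ℝ) ≤ (k:ℝ) := Nat.cast_nonneg k
          rw [div_sub_div _ _ (by positivity) (by positivity), div_le_div_iff₀ (by positivity) (by positivity)]
          ring_nf
          nlinarith [sq_nonneg ((k:ℝ)), pow_pos (show (0:ℝ) < (k:ℝ)+16 by linarith) 3,
            pow_pos (show (0:ℝ) < (k:ℝ)+17 by linarith) 3, sq_nonneg ((k:ℝ)+16), sq_nonneg ((k:ℝ)+17)]
        calc ∑ k ∈ Finset.range N, mb (k + 17)
            ≤ ∑ k ∈ Finset.range N, (64 / (3 * ((k:ℝ) + 16)^3) - 64 / (3 * ((k:ℝ) + 17)^3)) :=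
              Finset.sum_le_sum fun k _ => key k
          _ = ∑ k ∈ Finset.range N, ((fun j : ℕ => 64 / (3 * ((j:ℝ) + 16)^3)) k
                - (fun j : ℕ => 64 / (3 * ((j:ℝ) + 16)^3)) (k+1)) := by
              apply Finset.sum_congr rfl
              intro k _
              push_cast
              ring_nf
          _ = (fun j : ℕ => 64 / (3 * ((j:ℝ) + 16)^3)) 0
                - (fun j : ℕ => 64 / (3 * ((j:ℝ) + 16)^3)) N :=
              Finset.sum_range_sub' _ N
          _ ≤ 1/192 := by
              have h0 : (0:ℝ) ≤ 64 / (3 * ((N:ℝ) + 16)^3) := by positivity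
              simp only []
              norm_num
              linarith

lemma tsum_mb_lt : ∑' n, mb n < 1 / 2 := by
  rw [← Summable.sum_add_tsum_nat_add 17 summable_mb]
  have hfin : ∑ i ∈ Finset.range 17, mb i =
      256/729 + 1/16 + 576/15625 + 576/46656 + 576/117649 + 576/262144
      + 1024/531441 + 1024/1000000 + 1024/1771561 + 1024/2985984 + 1024/4826809
      + 1024/7529536 + 1024/11390625 + 1024/16777216 := by
    simp [Finset.sum_range_succ, mb]
    norm_num
  have := tail_le
  rw [hfin]
  norm_num at this ⊢
  linarith

/-- For every `s` with `Re s ≥ 12`,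
`|G₂(s) - 1| < (1/2) (2/3)^{Re(s)/2}`. -/
theorem statement3 :
    ∀ s : ℂ, 12 ≤ s.re → ‖G₂ s - 1‖ < 1 / 2 * ((2 / 3 : ℝ) ^ (s.re / 2)) := by
  intro s hs
  have hs1 : (1:ℝ) < s.re := by linarith
  have hlog2pos : (0:ℝ) < Real.log 2 := Real.log_pos (by norm_num)
  -- zeta'' as an L-series
  have habs : LSeries.abscissaOfAbsConv (LSeries.logMul^[2] 1) < s.re := by
    rw [LSeries.absicssaOfAbsConv_logPowMul, LSeries.abscissaOfAbsConv_one]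
    exact_mod_cast hs1
  have hev : riemannZeta =ᶠ[nhds s] LSeries 1 := by
    have hopen : IsOpen {z : ℂ | 1 < z.re} := isOpen_lt continuous_const Complex.continuous_re
    filter_upwards [hopen.mem_nhds hs1] with z hz
    exact (LSeries_one_eq_riemannZeta hz).symm
  have habs1 : LSeries.abscissaOfAbsConv (1 : ℕ → ℂ) < s.re := by
    rw [LSeries.abscissaOfAbsConv_one]
    exact_mod_cast hs1
  have hz2 : zeta'' s = LSeries (LSeries.logMul^[2] 1) s := by
    have h1 : zeta'' s = iteratedDeriv 2 (LSeries 1) s :=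
      Filter.EventuallyEq.iteratedDeriv_eq 2 hev
    rw [h1, LSeries_iteratedDeriv 2 habs1]
    norm_num
  set c : ℂ := (2 : ℂ) ^ s / (Real.log 2 : ℂ) ^ 2 with hc
  set g : ℕ → ℂ := fun n => c * LSeries.term (LSeries.logMul^[2] 1) s n with hgdef
  have hsum : LSeriesSummable (LSeries.logMul^[2] 1) s :=
    LSeriesSummable_of_abscissaOfAbsConv_lt_re habs
  have hgsum : Summable g := hsum.mul_left c
  have hG : G₂ s = ∑' n, g n := by
    rw [G₂, hz2, LSeries, tsum_mul_left]
  have h2s : (2:ℂ) ^ s ≠ 0 := by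
    intro h
    rw [Complex.cpow_eq_zero_iff] at h
    exact two_ne_zero h.1
  have hlc : ((Real.log 2 : ℝ) : ℂ) ≠ 0 := by
    exact_mod_cast hlog2pos.ne'
  have hg2 : g 2 = 1 := by
    rw [hgdef]
    simp only [LSeries.term_of_ne_zero (two_ne_zero), Function.iterate_succ,
      Function.iterate_zero, Function.comp_apply, id_eq, LSeries.logMul, Pi.one_apply,
      ← Complex.natCast_log]
    rw [hc]
    have hClog : Complex.log 2 ≠ 0 := by
      rw [show (2:ℂ) = ((2:ℝ):ℂ) by norm_num, ← Complex.ofReal_log (by norm_num : (0:ℝ) ≤ 2)]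
      exact_mod_cast hlog2pos.ne'
    push_cast
    field_simp
  have key : G₂ s - 1 = ∑' n, if n = 2 then 0 else g n := by
    rw [hG, Summable.tsum_eq_add_tsum_ite hgsum 2, hg2]
    ring
  set t : ℝ := (2/3 : ℝ) ^ (s.re / 2) with ht
  have htpos : 0 < t := Real.rpow_pos_of_pos (by norm_num) _
  -- termwise bound
  have hbound : ∀ n : ℕ, ‖if n = 2 then 0 else g n‖ ≤ t * mb n := by
    intro n
    by_cases h2 : n = 2
    · rw [if_pos h2]
      simp only [norm_zero]
      exact mul_nonneg htpos.le (mb_nonneg n)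
    rw [if_neg h2]
    rcases Nat.lt_or_ge n 3 with hn3 | hn3
    · -- n = 0 or 1
      interval_cases n
      · simp only [hgdef, LSeries.term_zero, mul_zero, norm_zero]
        exact mul_nonneg htpos.le (mb_nonneg 0)
      · have : g 1 = 0 := by
          rw [hgdef]
          simp [LSeries.term_of_ne_zero (one_ne_zero), LSeries.logMul]
        rw [this, norm_zero]
        exact mul_nonneg htpos.le (mb_nonneg 1)
      · exact absurd rfl h2
    -- main case n ≥ 3
    have hn0 : n ≠ 0 := by omega
    have hnR : (3:ℝ) ≤ (n:ℝ) := by exact_mod_cast hn3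
    have hnpos : (0:ℝ) < (n:ℝ) := by linarith
    have hln : 0 ≤ Real.log n := Real.log_nonneg (by linarith)
    -- norm computation
    have e2 : ‖g n‖ = (Real.log n)^2 / (Real.log 2)^2 * ((2:ℝ) ^ s.re / (n:ℝ) ^ s.re) := by
      rw [hgdef]
      simp only [LSeries.term_of_ne_zero hn0, Function.iterate_succ,
        Function.iterate_zero, Function.comp_apply, id_eq, LSeries.logMul, Pi.one_apply,
        ← Complex.natCast_log, mul_one]
      rw [hc, norm_mul, norm_div, norm_div, norm_pow]
      rw [Complex.norm_natCast_cpow_of_pos (by omega : 0 < n)]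
      rw [show ((2:ℂ)) = (((2:ℝ)):ℂ) by norm_num]
      rw [Complex.norm_cpow_eq_rpow_re_of_pos (by norm_num : (0:ℝ) < 2)]
      rw [norm_mul]
      simp only [Complex.norm_real, Real.norm_eq_abs, _root_.abs_of_nonneg hln,
        _root_.abs_of_nonneg hlog2pos.le]
      ring
    rw [e2]
    -- bound the power part
    have hpow : (2:ℝ) ^ s.re / (n:ℝ) ^ s.re ≤ t * (64 / (n:ℝ)^6) := by
      have hdiv : (2:ℝ) ^ s.re / (n:ℝ) ^ s.re = ((2:ℝ)/(n:ℝ)) ^ s.re := by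
        rw [Real.div_rpow (by norm_num) hnpos.le]
      have hsplit : ((2:ℝ)/(n:ℝ)) ^ s.re
          = ((2:ℝ)/(n:ℝ)) ^ (s.re/2) * ((2:ℝ)/(n:ℝ)) ^ (s.re/2) := by
        rw [← Real.rpow_add (by positivity)]
        norm_num
      have h1 : ((2:ℝ)/(n:ℝ)) ^ (s.re/2) ≤ t := by
        rw [ht]
        apply Real.rpow_le_rpow (by positivity) _ (by linarith)
        rw [div_le_div_iff₀ hnpos (by norm_num)]
        linarith
      have h2' : ((2:ℝ)/(n:ℝ)) ^ (s.re/2) ≤ ((2:ℝ)/(n:ℝ)) ^ ((6:ℕ):ℝ) := by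
        apply Real.rpow_le_rpow_of_exponent_ge (by positivity)
        · rw [div_le_one hnpos]; linarith
        · push_cast; linarith
      have h3 : ((2:ℝ)/(n:ℝ)) ^ ((6:ℕ):ℝ) = ((2:ℝ)/(n:ℝ)) ^ (6:ℕ) :=
        Real.rpow_natCast _ 6
      calc (2:ℝ) ^ s.re / (n:ℝ) ^ s.re
          = ((2:ℝ)/(n:ℝ)) ^ (s.re/2) * ((2:ℝ)/(n:ℝ)) ^ (s.re/2) := by
            rw [hdiv, hsplit]
        _ ≤ t * ((2:ℝ)/(n:ℝ)) ^ (6:ℕ) := by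
            apply mul_le_mul h1 (h2'.trans_eq h3) (by positivity) htpos.le
        _ = t * (64 / (n:ℝ)^6) := by
            rw [div_pow]
            norm_num
    -- bound the log part
    obtain ⟨K, hmb, hKlog, hKpos⟩ : ∃ K : ℝ, mb n = K * 64 / (n:ℝ)^6
        ∧ (Real.log n)^2 ≤ K * (Real.log 2)^2 ∧ 0 ≤ K := by
      have logle : ∀ k : ℕ, n ≤ 2^k → Real.log n ≤ (k:ℝ) * Real.log 2 := by
        intro k hk
        calc Real.log n ≤ Real.log ((2:ℝ)^k) := by
              apply Real.log_le_log hnpos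
              exact_mod_cast hk
          _ = (k:ℝ) * Real.log 2 := by rw [Real.log_pow]
      by_cases h4 : n ≤ 4
      · refine ⟨4, ?_, ?_, by norm_num⟩
        · rw [mb, if_neg (by omega), if_pos h4]
        · have hb := logle 2 (by omega)
          push_cast at hb
          have hsq := mul_le_mul hb hb (Real.log_nonneg (by linarith)) (by positivity)
          nlinarith [hsq]
      · by_cases h8 : n ≤ 8
        · refine ⟨9, ?_, ?_, by norm_num⟩
          · rw [mb, if_neg (by omega), if_neg h4, if_pos h8]
          · have hb := logle 3 (by omega)
            push_cast at hb
            have hsq := mul_le_mul hb hb (Real.log_nonneg (by linarith)) (by positivity)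
            nlinarith [hsq]
        · by_cases h16 : n ≤ 16
          · refine ⟨16, ?_, ?_, by norm_num⟩
            · rw [mb, if_neg (by omega), if_neg h4, if_neg h8, if_pos h16]
            · have hb := logle 4 (by omega)
              push_cast at hb
              have hsq := mul_le_mul hb hb (Real.log_nonneg (by linarith)) (by positivity)
              nlinarith [hsq]
          · refine ⟨(n:ℝ)^2, ?_, ?_, by positivity⟩
            · rw [mb, if_neg (by omega), if_neg h4, if_neg h8, if_neg h16]
            · have hb := logle n (Nat.lt_two_pow_self (n := n)).le
              have hsq := mul_le_mul hb hb (Real.log_nonneg (by linarith)) (by positivity)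
              nlinarith [hsq]
    rw [hmb]
    have hA : (Real.log n)^2 / (Real.log 2)^2 ≤ K := by
      rw [div_le_iff₀ (by positivity)]
      linarith
    calc (Real.log n)^2 / (Real.log 2)^2 * ((2:ℝ) ^ s.re / (n:ℝ) ^ s.re)
        ≤ K * (t * (64 / (n:ℝ)^6)) := by
          apply mul_le_mul hA hpow (by positivity) hKpos
      _ = t * (K * 64 / (n:ℝ)^6) := by ring
  -- assemble
  have hmbs : Summable (fun n => t * mb n) := summable_mb.mul_left t
  have hnsum : Summable (fun n => ‖if n = 2 then 0 else g n‖) := by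
    apply Summable.of_nonneg_of_le (fun n => norm_nonneg _) hbound hmbs
  calc ‖G₂ s - 1‖ = ‖∑' n, if n = 2 then 0 else g n‖ := by rw [key]
    _ ≤ ∑' n, ‖if n = 2 then 0 else g n‖ := norm_tsum_le_tsum_norm hnsum
    _ ≤ ∑' n, t * mb n := Summable.tsum_le_tsum hbound hnsum hmbs
    _ = t * ∑' n, mb n := tsum_mul_left
    _ < t * (1/2) := by
        exact mul_lt_mul_of_pos_left tsum_mb_lt htpos
    _ = 1 / 2 * ((2 / 3 : ℝ) ^ (s.re / 2)) := by rw [ht]; ring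
end

section
/- For every complex number s = σ + it with σ ≤ −1, one has |(ζ''/ζ)(1 − s)| ≤ 2^σ·((19/8)·(log 2)² + (13/4)·log 2 + 5/2). -/
open Complex Real MeasureTheory
open scoped Classical

section Statement15Aux

open scoped LSeries.notation
open ArithmeticFunction


lemma log2_ub : Real.log 2 ≤ 0.6931472 := le_of_lt (lt_of_lt_of_le Real.log_two_lt_d9 (by norm_num))

lemma log3_ub : Real.log 3 ≤ 1.1022208 := by
  have h1 : Real.log 9 = 2 * Real.log 3 := by
    rw [show (9:ℝ) = 3^2 by norm_num, Real.log_pow]; push_cast; ring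
  have h2 : Real.log 9 = Real.log 8 + Real.log (9/8) := by
    rw [← Real.log_mul (show (8:ℝ) ≠ 0 by norm_num) (by norm_num : ((9:ℝ)/8) ≠ 0)]; norm_num
  have h3 : Real.log 8 = 3 * Real.log 2 := by
    rw [show (8:ℝ) = 2^3 by norm_num, Real.log_pow]; push_cast; ring
  have h4 : Real.log (9/8) ≤ 9/8 - 1 := by
    have := Real.log_le_sub_one_of_pos (show (0:ℝ) < 9/8 by norm_num); linarith
  have h5 := Real.log_two_lt_d9
  linarith

lemma log5_ub : Real.log 5 ≤ 1.6116646 := by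
  have h1 : Real.log 25 = 2 * Real.log 5 := by
    rw [show (25:ℝ) = 5^2 by norm_num, Real.log_pow]; push_cast; ring
  have h2 : Real.log 25 = Real.log 24 + Real.log (25/24) := by
    rw [← Real.log_mul (show (24:ℝ) ≠ 0 by norm_num) (by norm_num : ((25:ℝ)/24) ≠ 0)]; norm_num
  have h3 : Real.log 24 = 3 * Real.log 2 + Real.log 3 := by
    rw [show (24:ℝ) = 2^3 * 3 by norm_num, Real.log_mul (by norm_num) (by norm_num), Real.log_pow]
    push_cast; ring
  have h4 : Real.log (25/24) ≤ 25/24 - 1 := by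
    have := Real.log_le_sub_one_of_pos (show (0:ℝ) < 25/24 by norm_num); linarith
  have h5 := Real.log_two_lt_d9
  have h6 := log3_ub
  linarith

lemma log7_ub : Real.log 7 ≤ 1.9478215 := by
  have h1 : Real.log 49 = 2 * Real.log 7 := by
    rw [show (49:ℝ) = 7^2 by norm_num, Real.log_pow]; push_cast; ring
  have h2 : Real.log 49 = Real.log 48 + Real.log (49/48) := by
    rw [← Real.log_mul (show (48:ℝ) ≠ 0 by norm_num) (by norm_num : ((49:ℝ)/48) ≠ 0)]; norm_num
  have h3 : Real.log 48 = 4 * Real.log 2 + Real.log 3 := by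
    rw [show (48:ℝ) = 2^4 * 3 by norm_num, Real.log_mul (by norm_num) (by norm_num), Real.log_pow]
    push_cast; ring
  have h4 : Real.log (49/48) ≤ 49/48 - 1 := by
    have := Real.log_le_sub_one_of_pos (show (0:ℝ) < 49/48 by norm_num); linarith
  have h5 := Real.log_two_lt_d9
  have h6 := log3_ub
  linarith

lemma log11_ub : Real.log 11 ≤ 2.4008302 := by
  have h1 : Real.log 121 = 2 * Real.log 11 := by
    rw [show (121:ℝ) = 11^2 by norm_num, Real.log_pow]; push_cast; ring
  have h2 : Real.log 121 = Real.log 120 + Real.log (121/120) := by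
    rw [← Real.log_mul (show (120:ℝ) ≠ 0 by norm_num) (by norm_num : ((121:ℝ)/120) ≠ 0)]; norm_num
  have h3 : Real.log 120 = 3 * Real.log 2 + Real.log 3 + Real.log 5 := by
    rw [show (120:ℝ) = 2^3 * (3 * 5) by norm_num, Real.log_mul (by norm_num) (by norm_num),
      Real.log_mul (by norm_num) (by norm_num), Real.log_pow]
    push_cast; ring
  have h4 : Real.log (121/120) ≤ 121/120 - 1 := by
    have := Real.log_le_sub_one_of_pos (show (0:ℝ) < 121/120 by norm_num); linarith
  have h5 := Real.log_two_lt_d9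
  have h6 := log3_ub
  have h7 := log5_ub
  linarith

lemma log13_ub : Real.log 13 ≤ 2.5677182 := by
  have h1 : Real.log 169 = 2 * Real.log 13 := by
    rw [show (169:ℝ) = 13^2 by norm_num, Real.log_pow]; push_cast; ring
  have h2 : Real.log 169 = Real.log 168 + Real.log (169/168) := by
    rw [← Real.log_mul (show (168:ℝ) ≠ 0 by norm_num) (by norm_num : ((169:ℝ)/168) ≠ 0)]; norm_num
  have h3 : Real.log 168 = 3 * Real.log 2 + Real.log 3 + Real.log 7 := by
    rw [show (168:ℝ) = 2^3 * (3 * 7) by norm_num, Real.log_mul (by norm_num) (by norm_num),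
      Real.log_mul (by norm_num) (by norm_num), Real.log_pow]
    push_cast; ring
  have h4 : Real.log (169/168) ≤ 169/168 - 1 := by
    have := Real.log_le_sub_one_of_pos (show (0:ℝ) < 169/168 by norm_num); linarith
  have h5 := Real.log_two_lt_d9
  have h6 := log3_ub
  have h7 := log7_ub
  linarith

lemma log4_eq : Real.log 4 = 2 * Real.log 2 := by
  rw [show (4:ℝ) = 2^2 by norm_num, Real.log_pow]; push_cast; ring
lemma log6_eq : Real.log 6 = Real.log 2 + Real.log 3 := by
  rw [show (6:ℝ) = 2*3 by norm_num, Real.log_mul (by norm_num) (by norm_num)]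
lemma log8_eq : Real.log 8 = 3 * Real.log 2 := by
  rw [show (8:ℝ) = 2^3 by norm_num, Real.log_pow]; push_cast; ring
lemma log9_eq : Real.log 9 = 2 * Real.log 3 := by
  rw [show (9:ℝ) = 3^2 by norm_num, Real.log_pow]; push_cast; ring
lemma log10_eq : Real.log 10 = Real.log 2 + Real.log 5 := by
  rw [show (10:ℝ) = 2*5 by norm_num, Real.log_mul (by norm_num) (by norm_num)]
lemma log12_eq : Real.log 12 = 2 * Real.log 2 + Real.log 3 := by
  rw [show (12:ℝ) = 2^2*3 by norm_num, Real.log_mul (by norm_num) (by norm_num), Real.log_pow]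
  push_cast; ring
lemma log14_eq : Real.log 14 = Real.log 2 + Real.log 7 := by
  rw [show (14:ℝ) = 2*7 by norm_num, Real.log_mul (by norm_num) (by norm_num)]
lemma log15_eq : Real.log 15 = Real.log 3 + Real.log 5 := by
  rw [show (15:ℝ) = 3*5 by norm_num, Real.log_mul (by norm_num) (by norm_num)]
lemma log16_eq : Real.log 16 = 4 * Real.log 2 := by
  rw [show (16:ℝ) = 2^4 by norm_num, Real.log_pow]; push_cast; ring

lemma log16_ub : Real.log 16 ≤ 2.7725888 := by
  have := log2_ub; rw [log16_eq]; linarith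

lemma head_b : ∑ n ∈ Finset.range 17, Real.log n / (n:ℝ)^2 ≤ 0.7081 := by
  simp only [Finset.sum_range_succ, Finset.sum_range_zero]
  norm_num [Real.log_one]
  have h2 := log2_ub; have h3 := log3_ub; have h5 := log5_ub; have h7 := log7_ub
  have h11 := log11_ub; have h13 := log13_ub
  rw [log4_eq, log6_eq, log8_eq, log9_eq, log10_eq, log12_eq, log14_eq, log15_eq, log16_eq]
  linarith

set_option maxHeartbeats 1000000 in
lemma head_a : ∑ n ∈ Finset.range 17, (Real.log n)^2 / (n:ℝ)^2 ≤ 1.0548 := by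
  simp only [Finset.sum_range_succ, Finset.sum_range_zero]
  norm_num [Real.log_one]
  have q2 : Real.log 2 ^ 2 ≤ 0.4804531 :=
    le_trans (pow_le_pow_left₀ (Real.log_nonneg (by norm_num)) log2_ub 2) (by norm_num)
  have q3 : Real.log 3 ^ 2 ≤ 1.2148907 :=
    le_trans (pow_le_pow_left₀ (Real.log_nonneg (by norm_num)) log3_ub 2) (by norm_num)
  have q4 : Real.log 4 ^ 2 ≤ 1.9218122 := by
    rw [log4_eq]
    nlinarith [Real.log_nonneg (show (1:ℝ) ≤ 2 by norm_num), log2_ub]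
  have q5 : Real.log 5 ^ 2 ≤ 2.5974628 :=
    le_trans (pow_le_pow_left₀ (Real.log_nonneg (by norm_num)) log5_ub 2) (by norm_num)
  have q6 : Real.log 6 ^ 2 ≤ 3.2233463 := by
    rw [log6_eq]
    nlinarith [Real.log_nonneg (show (1:ℝ) ≤ 2 by norm_num),
      Real.log_nonneg (show (1:ℝ) ≤ 3 by norm_num), log2_ub, log3_ub]
  have q7 : Real.log 7 ^ 2 ≤ 3.7940086 :=
    le_trans (pow_le_pow_left₀ (Real.log_nonneg (by norm_num)) log7_ub 2) (by norm_num)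
  have q8 : Real.log 8 ^ 2 ≤ 4.3240774 := by
    rw [log8_eq]
    nlinarith [Real.log_nonneg (show (1:ℝ) ≤ 2 by norm_num), log2_ub]
  have q9 : Real.log 9 ^ 2 ≤ 4.8595628 := by
    rw [log9_eq]
    nlinarith [Real.log_nonneg (show (1:ℝ) ≤ 3 by norm_num), log3_ub]
  have q10 : Real.log 10 ^ 2 ≤ 5.3121575 := by
    rw [log10_eq]
    nlinarith [Real.log_nonneg (show (1:ℝ) ≤ 2 by norm_num),
      Real.log_nonneg (show (1:ℝ) ≤ 5 by norm_num), log2_ub, log5_ub]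
  have q11 : Real.log 11 ^ 2 ≤ 5.7639857 :=
    le_trans (pow_le_pow_left₀ (Real.log_nonneg (by norm_num)) log11_ub 2) (by norm_num)
  have q12 : Real.log 12 ^ 2 ≤ 6.192708 := by
    rw [log12_eq]
    nlinarith [Real.log_nonneg (show (1:ℝ) ≤ 2 by norm_num),
      Real.log_nonneg (show (1:ℝ) ≤ 3 by norm_num), log2_ub, log3_ub]
  have q13 : Real.log 13 ^ 2 ≤ 6.5931768 :=
    le_trans (pow_le_pow_left₀ (Real.log_nonneg (by norm_num)) log13_ub 2) (by norm_num)
  have q14 : Real.log 14 ^ 2 ≤ 6.9747157 := by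
    rw [log14_eq]
    nlinarith [Real.log_nonneg (show (1:ℝ) ≤ 2 by norm_num),
      Real.log_nonneg (show (1:ℝ) ≤ 7 by norm_num), log2_ub, log7_ub]
  have q15 : Real.log 15 ^ 2 ≤ 7.365174 := by
    rw [log15_eq]
    nlinarith [Real.log_nonneg (show (1:ℝ) ≤ 3 by norm_num),
      Real.log_nonneg (show (1:ℝ) ≤ 5 by norm_num), log3_ub, log5_ub]
  have q16 : Real.log 16 ^ 2 ≤ 7.6872487 := by
    rw [log16_eq]
    nlinarith [Real.log_nonneg (show (1:ℝ) ≤ 2 by norm_num), log2_ub]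
  linarith



lemma log_facts {n : ℕ} (hn : 16 ≤ n) :
    Real.log ((n:ℝ)+1) - 1/(n:ℝ) ≤ Real.log (n:ℝ) ∧ Real.log (n:ℝ) ≤ Real.log ((n:ℝ)+1)
    ∧ 2.772 ≤ Real.log ((n:ℝ)+1) := by
  have hN : (16:ℝ) ≤ (n:ℝ) := by exact_mod_cast hn
  have hN0 : (0:ℝ) < (n:ℝ) := by linarith
  refine ⟨?_, ?_, ?_⟩
  · have h1 : Real.log (((n:ℝ)+1)/(n:ℝ)) ≤ ((n:ℝ)+1)/(n:ℝ) - 1 :=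
      Real.log_le_sub_one_of_pos (by positivity)
    have h2 : Real.log (((n:ℝ)+1)/(n:ℝ)) = Real.log ((n:ℝ)+1) - Real.log (n:ℝ) :=
      Real.log_div (by linarith) (by linarith)
    have h3 : ((n:ℝ)+1)/(n:ℝ) - 1 = 1/(n:ℝ) := by field_simp; ring
    linarith
  · exact Real.log_le_log (by linarith) (by linarith)
  · have h4 : Real.log 16 ≤ Real.log ((n:ℝ)+1) := Real.log_le_log (by norm_num) (by linarith)
    have h5 : Real.log 16 = 4 * Real.log 2 := by
      rw [show (16:ℝ) = 2^4 by norm_num, Real.log_pow]; push_cast; ring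
    have h6 := Real.log_two_gt_d9
    linarith

lemma tel_b {n : ℕ} (hn : 16 ≤ n) :
    Real.log ((n:ℝ)+1) / ((n:ℝ)+1)^2 ≤
      (Real.log (n:ℝ) + 1)/(n:ℝ) - (Real.log ((n:ℝ)+1) + 1)/((n:ℝ)+1) := by
  obtain ⟨h1, h2, h3⟩ := log_facts hn
  have hN : (16:ℝ) ≤ (n:ℝ) := by exact_mod_cast hn
  have hN0 : (0:ℝ) < (n:ℝ) := by linarith
  set N := (n:ℝ) with hNdef
  set LL := Real.log (N+1)
  set ll := Real.log N
  set d := 1/N with hddef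
  have hd0 : 0 < d := by positivity
  have hd16 : d ≤ 1/16 := by rw [hddef]; rw [div_le_div_iff₀ hN0 (by norm_num)]; linarith
  have hdn : d * N = 1 := by rw [hddef]; field_simp
  have m : (LL+1-d)*(N+1)^2 ≤ (ll+1)*(N+1)^2 :=
    mul_le_mul_of_nonneg_right (by linarith) (sq_nonneg (N+1))
  have idt : (LL+1-d)*(N+1)^2 - (LL+1)*(N*(N+1)) - LL*N
      = LL - 1 - d + (d*N - 1)*(-(N+2)) := by ring
  rw [hdn] at idt
  have key : 0 ≤ (ll+1)*(N+1)^2 - (LL+1)*(N*(N+1)) - LL*N := by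
    have : 0 ≤ (LL+1-d)*(N+1)^2 - (LL+1)*(N*(N+1)) - LL*N := by rw [idt]; linarith
    linarith
  have expand : (ll+1)/N - (LL+1)/(N+1) - LL/(N+1)^2
      = ((ll+1)*(N+1)^2 - (LL+1)*(N*(N+1)) - LL*N) / (N*(N+1)^2) := by
    field_simp
  have hpos : (0:ℝ) < N*(N+1)^2 := by positivity
  have h9 := div_nonneg key (le_of_lt hpos)
  rw [← expand] at h9
  linarith

lemma tel_a {n : ℕ} (hn : 16 ≤ n) :
    (Real.log ((n:ℝ)+1))^2 / ((n:ℝ)+1)^2 ≤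
      ((Real.log (n:ℝ))^2 + 2*Real.log (n:ℝ) + 2)/(n:ℝ)
        - ((Real.log ((n:ℝ)+1))^2 + 2*Real.log ((n:ℝ)+1) + 2)/((n:ℝ)+1) := by
  obtain ⟨h1, h2, h3⟩ := log_facts hn
  have hN : (16:ℝ) ≤ (n:ℝ) := by exact_mod_cast hn
  have hN0 : (0:ℝ) < (n:ℝ) := by linarith
  set N := (n:ℝ) with hNdef
  set LL := Real.log (N+1)
  set ll := Real.log N
  set d := 1/N with hddef
  have hd0 : 0 < d := by positivity
  have hd16 : d ≤ 1/16 := by rw [hddef]; rw [div_le_div_iff₀ hN0 (by norm_num)]; linarith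
  have hdn : d * N = 1 := by rw [hddef]; field_simp
  have hmono : (LL-d)^2+2*(LL-d)+2 ≤ ll^2+2*ll+2 := by
    have hp : 0 ≤ (ll - (LL-d)) * (ll + (LL-d) + 2) :=
      mul_nonneg (by linarith) (by nlinarith)
    nlinarith [hp]
  have m : ((LL-d)^2+2*(LL-d)+2)*(N+1)^2 ≤ (ll^2+2*ll+2)*(N+1)^2 :=
    mul_le_mul_of_nonneg_right hmono (sq_nonneg (N+1))
  have idt : ((LL-d)^2+2*(LL-d)+2)*(N+1)^2 - (LL^2+2*LL+2)*(N*(N+1)) - LL^2*N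
      = (LL-1-d)^2 - 2 - 2*d + (d*N - 1)*(-2*(LL+1)*(N+2) + 2*(1+d)) + (d*N-1)^2 := by ring
  rw [hdn] at idt
  have key : 0 ≤ (ll^2+2*ll+2)*(N+1)^2 - (LL^2+2*LL+2)*(N*(N+1)) - LL^2*N := by
    have h9 : (1.7:ℝ) ≤ LL - 1 - d := by linarith
    have : 0 ≤ ((LL-d)^2+2*(LL-d)+2)*(N+1)^2 - (LL^2+2*LL+2)*(N*(N+1)) - LL^2*N := by
      rw [idt]; nlinarith [h9]
    linarith
  have expand : (ll^2+2*ll+2)/N - (LL^2+2*LL+2)/(N+1) - LL^2/(N+1)^2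
      = ((ll^2+2*ll+2)*(N+1)^2 - (LL^2+2*LL+2)*(N*(N+1)) - LL^2*N) / (N*(N+1)^2) := by
    field_simp
  have hpos : (0:ℝ) < N*(N+1)^2 := by positivity
  have h9 := div_nonneg key (le_of_lt hpos)
  rw [← expand] at h9
  linarith

noncomputable def db (m : ℕ) : ℝ := (Real.log m + 1)/m
noncomputable def da (m : ℕ) : ℝ := ((Real.log m)^2 + 2*Real.log m + 2)/m

lemma db_nonneg (m : ℕ) : 0 ≤ db m := by
  unfold db
  apply div_nonneg _ (Nat.cast_nonneg m)
  linarith [Real.log_natCast_nonneg m]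

lemma da_nonneg (m : ℕ) : 0 ≤ da m := by
  unfold da
  apply div_nonneg _ (Nat.cast_nonneg m)
  nlinarith [Real.log_natCast_nonneg m, sq_nonneg (Real.log m)]

lemma range_b (k : ℕ) :
    ∑ n ∈ Finset.range (17+k), Real.log n / (n:ℝ)^2 ≤ 0.7081 + (db 16 - db (16+k)) := by
  induction k with
  | zero => simpa using head_b
  | succ k ih =>
    rw [show 17 + (k+1) = (17+k) + 1 by ring, Finset.sum_range_succ]
    have ht := tel_b (n := 16+k) (by omega)
    have hc1 : ((16+k : ℕ) : ℝ) = (16:ℝ) + k := by push_cast; ring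
    have hc2 : ((17+k : ℕ) : ℝ) = ((16:ℝ)+k) + 1 := by push_cast; ring
    have hdb1 : db (16+k) = (Real.log ((16:ℝ)+k) + 1)/((16:ℝ)+k) := by rw [db, hc1]
    have hdb2 : db (16+k+1) = (Real.log (((16:ℝ)+k)+1) + 1)/(((16:ℝ)+k)+1) := by
      rw [db, show 16+k+1 = 17+k by ring, hc2]
    rw [hc1] at ht
    have hterm : Real.log ((17+k : ℕ) : ℝ) / (((17+k : ℕ):ℝ))^2 ≤ db (16+k) - db (16+k+1) := by
      rw [hc2, hdb1, hdb2]; exact ht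
    have : 16 + (k+1) = 16 + k + 1 := by ring
    rw [this]
    linarith

lemma range_a (k : ℕ) :
    ∑ n ∈ Finset.range (17+k), (Real.log n)^2 / (n:ℝ)^2 ≤ 1.0548 + (da 16 - da (16+k)) := by
  induction k with
  | zero => simpa using head_a
  | succ k ih =>
    rw [show 17 + (k+1) = (17+k) + 1 by ring, Finset.sum_range_succ]
    have ht := tel_a (n := 16+k) (by omega)
    have hc1 : ((16+k : ℕ) : ℝ) = (16:ℝ) + k := by push_cast; ring
    have hc2 : ((17+k : ℕ) : ℝ) = ((16:ℝ)+k) + 1 := by push_cast; ring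
    have hda1 : da (16+k) = ((Real.log ((16:ℝ)+k))^2 + 2*Real.log ((16:ℝ)+k) + 2)/((16:ℝ)+k) := by
      rw [da, hc1]
    have hda2 : da (16+k+1)
        = ((Real.log (((16:ℝ)+k)+1))^2 + 2*Real.log (((16:ℝ)+k)+1) + 2)/(((16:ℝ)+k)+1) := by
      rw [da, show 16+k+1 = 17+k by ring, hc2]
    rw [hc1] at ht
    have hterm : (Real.log ((17+k : ℕ) : ℝ))^2 / (((17+k : ℕ):ℝ))^2 ≤ da (16+k) - da (16+k+1) := by
      rw [hc2, hda1, hda2]; exact ht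
    have : 16 + (k+1) = 16 + k + 1 := by ring
    rw [this]
    linarith

lemma db16 : db 16 ≤ 0.23579 := by
  unfold db
  rw [div_le_iff₀ (by norm_num : (0:ℝ) < (16:ℕ))]
  have : ((16:ℕ):ℝ) = (16:ℝ) := by norm_num
  rw [this]
  linarith [log16_ub]

lemma da16 : da 16 ≤ 0.95203 := by
  unfold da
  rw [div_le_iff₀ (by norm_num : (0:ℝ) < (16:ℕ))]
  have h16 : ((16:ℕ):ℝ) = (16:ℝ) := by norm_num
  rw [h16]
  have hq : Real.log 16 ^ 2 ≤ 7.6872487 := by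
    nlinarith [Real.log_nonneg (show (1:ℝ) ≤ 16 by norm_num), log16_ub]
  nlinarith [log16_ub, hq]

lemma sum_b_bound (S : Finset ℕ) : ∑ n ∈ S, Real.log n / (n:ℝ)^2 ≤ 0.944 := by
  have hsub : S ⊆ Finset.range (17 + S.sup _root_.id) := by
    intro n hn
    simp only [Finset.mem_range]
    have := Finset.le_sup (f := _root_.id) hn
    simp only [_root_.id] at this
    omega
  calc ∑ n ∈ S, Real.log n / (n:ℝ)^2
      ≤ ∑ n ∈ Finset.range (17 + S.sup _root_.id), Real.log n / (n:ℝ)^2 :=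
        Finset.sum_le_sum_of_subset_of_nonneg hsub (fun i _ _ =>
          div_nonneg (Real.log_natCast_nonneg i) (by positivity))
    _ ≤ 0.7081 + (db 16 - db (16 + S.sup _root_.id)) := range_b _
    _ ≤ 0.944 := by linarith [db16, db_nonneg (16 + S.sup _root_.id)]

lemma sum_a_bound (S : Finset ℕ) : ∑ n ∈ S, (Real.log n)^2 / (n:ℝ)^2 ≤ 2.007 := by
  have hsub : S ⊆ Finset.range (17 + S.sup _root_.id) := by
    intro n hn
    simp only [Finset.mem_range]
    have := Finset.le_sup (f := _root_.id) hn
    simp only [_root_.id] at this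
    omega
  calc ∑ n ∈ S, (Real.log n)^2 / (n:ℝ)^2
      ≤ ∑ n ∈ Finset.range (17 + S.sup _root_.id), (Real.log n)^2 / (n:ℝ)^2 :=
        Finset.sum_le_sum_of_subset_of_nonneg hsub (fun i _ _ =>
          div_nonneg (sq_nonneg _) (by positivity))
    _ ≤ 1.0548 + (da 16 - da (16 + S.sup _root_.id)) := range_a _
    _ ≤ 2.007 := by linarith [da16, da_nonneg (16 + S.sup _root_.id)]



lemma term_bound {f : ℕ → ℂ} {w : ℂ} (hw : 2 ≤ w.re) {r : ℕ → ℝ}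
    (hr : ∀ n, 1 ≤ n → ‖f n‖ ≤ r n) (hr1 : r 1 = 0) (hrpos : ∀ n, 0 ≤ r n) (n : ℕ) :
    ‖LSeries.term f w n‖ ≤ 4 * (2:ℝ)^(-w.re) * (r n / (n:ℝ)^2) := by
  have h2 : (0:ℝ) ≤ 4 * (2:ℝ)^(-w.re) := by positivity
  rcases Nat.lt_or_ge n 2 with h | h
  · interval_cases n
    · simp [LSeries.term]
    · rw [LSeries.norm_term_eq]
      simp only [if_neg (one_ne_zero)]
      have : ‖f 1‖ ≤ 0 := le_of_le_of_eq (hr 1 le_rfl) hr1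
      have h0 : ‖f 1‖ = 0 := le_antisymm this (norm_nonneg _)
      rw [h0]
      simp
      positivity
  · have hn0 : (n:ℝ) ≠ 0 := by positivity
    have hn2 : (2:ℝ) ≤ (n:ℝ) := by exact_mod_cast h
    have hnpos : (0:ℝ) < (n:ℝ) := by linarith
    rw [LSeries.norm_term_eq, if_neg (by omega)]
    have e1 : (n:ℝ)^(w.re) = (n:ℝ)^2 * (n:ℝ)^(w.re - 2) := by
      rw [show (n:ℝ)^2 = (n:ℝ)^((2:ℕ):ℝ) by rw [Real.rpow_natCast],
        ← Real.rpow_add hnpos]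
      norm_num
    have e2 : (2:ℝ)^(w.re-2) ≤ (n:ℝ)^(w.re-2) :=
      Real.rpow_le_rpow (by norm_num) hn2 (by linarith)
    have hd1 : (0:ℝ) < (n:ℝ)^2 * (2:ℝ)^(w.re-2) := by positivity
    have step1 : ‖f n‖ / (n:ℝ)^(w.re) ≤ r n / ((n:ℝ)^2 * (2:ℝ)^(w.re-2)) := by
      apply div_le_div₀ (hrpos n) (hr n (by omega)) hd1
      rw [e1]
      exact mul_le_mul_of_nonneg_left e2 (by positivity)
    have step2 : r n / ((n:ℝ)^2 * (2:ℝ)^(w.re-2)) = 4 * (2:ℝ)^(-w.re) * (r n / (n:ℝ)^2) := by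
      have hx : (2:ℝ)^(w.re-2) * (2:ℝ)^(-w.re) = 1/4 := by
        rw [← Real.rpow_add (by norm_num : (0:ℝ) < 2)]
        rw [show w.re - 2 + -w.re = ((-2:ℤ):ℝ) by push_cast; ring, Real.rpow_intCast]
        norm_num
      have h2p : (0:ℝ) < (2:ℝ)^(w.re-2) := Real.rpow_pos_of_pos (by norm_num) _
      have h2n : (0:ℝ) < (2:ℝ)^(-w.re) := Real.rpow_pos_of_pos (by norm_num) _
      field_simp
      linear_combination (-4 * r n) * hx
    rw [step2] at step1
    exact step1

lemma LSeries_norm_le {f : ℕ → ℂ} {w : ℂ} (hw : 2 ≤ w.re) (hsum : LSeriesSummable f w)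
    {r : ℕ → ℝ} (hr : ∀ n, 1 ≤ n → ‖f n‖ ≤ r n) (hr1 : r 1 = 0) (hrpos : ∀ n, 0 ≤ r n)
    {M : ℝ} (hM : ∀ T : Finset ℕ, ∑ n ∈ T, r n / (n:ℝ)^2 ≤ M) :
    ‖LSeries f w‖ ≤ 4 * (2:ℝ)^(-w.re) * M := by
  have hns : Summable fun n => ‖LSeries.term f w n‖ := summable_norm_iff.mpr hsum
  have h2 : (0:ℝ) ≤ 4 * (2:ℝ)^(-w.re) := by positivity
  calc ‖LSeries f w‖ ≤ ∑' n, ‖LSeries.term f w n‖ := norm_tsum_le_tsum_norm hns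
    _ ≤ 4 * (2:ℝ)^(-w.re) * M := by
        apply hns.tsum_le_of_sum_le
        intro T
        calc ∑ n ∈ T, ‖LSeries.term f w n‖
            ≤ ∑ n ∈ T, 4 * (2:ℝ)^(-w.re) * (r n / (n:ℝ)^2) :=
              Finset.sum_le_sum (fun n _ => term_bound hw hr hr1 hrpos n)
          _ = 4 * (2:ℝ)^(-w.re) * ∑ n ∈ T, r n / (n:ℝ)^2 := by rw [Finset.mul_sum]
          _ ≤ 4 * (2:ℝ)^(-w.re) * M := mul_le_mul_of_nonneg_left (hM T) h2

lemma zeta_div_eq {w : ℂ} (hw : 1 < w.re) :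
    iteratedDeriv 2 riemannZeta w / riemannZeta w
      = (LSeries ↗Λ w)^2 + LSeries (LSeries.logMul ↗Λ) w := by
  have habs : LSeries.abscissaOfAbsConv ↗Λ < w.re := by
    have h1 : LSeries.abscissaOfAbsConv ↗Λ ≤ 1 :=
      LSeries.abscissaOfAbsConv_le_of_forall_lt_LSeriesSummable (x := 1) fun y hy =>
        LSeriesSummable_vonMangoldt (by simpa using hy)
    refine lt_of_le_of_lt h1 ?_
    exact_mod_cast hw
  have hζ : riemannZeta w ≠ 0 := riemannZeta_ne_zero_of_one_lt_re hw
  have hne1 : w ≠ 1 := by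
    intro h; rw [h] at hw; simp at hw
  have hopen : IsOpen {z : ℂ | 1 < z.re} := isOpen_lt continuous_const Complex.continuous_re
  have hev : deriv riemannZeta =ᶠ[nhds w] (fun z => -(riemannZeta z * LSeries ↗Λ z)) := by
    filter_upwards [hopen.mem_nhds hw] with z hz
    have h := LSeries_vonMangoldt_eq_deriv_riemannZeta_div hz
    have hz0 : riemannZeta z ≠ 0 := riemannZeta_ne_zero_of_one_lt_re hz
    rw [eq_div_iff hz0] at h
    linear_combination h
  have hdζ : DifferentiableAt ℂ riemannZeta w := differentiableAt_riemannZeta hne1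
  have hdL : HasDerivAt (LSeries ↗Λ) (-LSeries (LSeries.logMul ↗Λ) w) w :=
    LSeries_hasDerivAt habs
  have hderiv1 : deriv riemannZeta w = -(riemannZeta w * LSeries ↗Λ w) := hev.self_of_nhds
  have hprod : HasDerivAt (fun z => -(riemannZeta z * LSeries ↗Λ z))
      (-(deriv riemannZeta w * LSeries ↗Λ w
        + riemannZeta w * (-LSeries (LSeries.logMul ↗Λ) w))) w :=
    (hdζ.hasDerivAt.mul hdL).neg
  have h2 : iteratedDeriv 2 riemannZeta w
      = -(deriv riemannZeta w * LSeries ↗Λ w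
        + riemannZeta w * (-LSeries (LSeries.logMul ↗Λ) w)) := by
    rw [show (2:ℕ) = 1 + 1 by rfl, iteratedDeriv_succ, iteratedDeriv_one]
    rw [Filter.EventuallyEq.deriv_eq hev]
    exact hprod.deriv
  rw [h2, hderiv1]
  field_simp
  ring


lemma habs' {w : ℂ} (hw : 1 < w.re) : LSeries.abscissaOfAbsConv ↗Λ < w.re := by
  have h1 : LSeries.abscissaOfAbsConv ↗Λ ≤ 1 :=
    LSeries.abscissaOfAbsConv_le_of_forall_lt_LSeriesSummable (x := 1) fun y hy =>
      LSeriesSummable_vonMangoldt (by simpa using hy)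
  refine lt_of_le_of_lt h1 ?_
  exact_mod_cast hw

end Statement15Aux

open scoped LSeries.notation in
open ArithmeticFunction in
/-- For every `s = σ + it` with `σ ≤ -1`,
`|(ζ''/ζ)(1 - s)| ≤ 2^σ ((19/8) (log 2)² + (13/4) log 2 + 5/2)`. -/
theorem statement15 :
    ∀ s : ℂ, s.re ≤ -1 →
      ‖zeta'' (1 - s) / riemannZeta (1 - s)‖ ≤
        (2 : ℝ) ^ s.re * (19 / 8 * (Real.log 2) ^ 2 + 13 / 4 * Real.log 2 + 5 / 2) := by
  rw [show zeta'' = iteratedDeriv 2 riemannZeta from rfl]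

  intro s hs
  set w := 1 - s with hwdef
  have hwre : w.re = 1 - s.re := by simp [hwdef, Complex.sub_re, Complex.one_re]
  have hw2 : (2:ℝ) ≤ w.re := by rw [hwre]; linarith
  have hw1 : (1:ℝ) < w.re := by linarith
  have habs := habs' hw1
  -- bound for LSeries of Λ
  have hrb : ∀ n : ℕ, 1 ≤ n → ‖(↗Λ) n‖ ≤ Real.log n := by
    intro n _
    simp only [Complex.norm_real]
    rw [Real.norm_eq_abs, _root_.abs_of_nonneg vonMangoldt_nonneg]
    exact vonMangoldt_le_log
  have hb : ‖LSeries ↗Λ w‖ ≤ 4 * (2:ℝ)^(-w.re) * 0.944 :=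
    LSeries_norm_le hw2 (LSeriesSummable_vonMangoldt hw1) hrb (by simp)
      (fun n => Real.log_natCast_nonneg n) sum_b_bound
  -- bound for LSeries of logMul Λ
  have hra : ∀ n : ℕ, 1 ≤ n → ‖(LSeries.logMul ↗Λ) n‖ ≤ (Real.log n)^2 := by
    intro n _
    rw [LSeries.logMul]
    rw [norm_mul]
    rw [← Complex.natCast_log, Complex.norm_real, Real.norm_eq_abs,
      _root_.abs_of_nonneg (Real.log_natCast_nonneg n), Complex.norm_real, Real.norm_eq_abs,
      _root_.abs_of_nonneg vonMangoldt_nonneg, sq]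
    exact mul_le_mul_of_nonneg_left vonMangoldt_le_log (Real.log_natCast_nonneg n)
  have ha : ‖LSeries (LSeries.logMul ↗Λ) w‖ ≤ 4 * (2:ℝ)^(-w.re) * 2.007 :=
    LSeries_norm_le hw2 (LSeriesSummable_logMul_of_lt_re habs) hra (by simp)
      (fun n => sq_nonneg _) sum_a_bound
  -- put together
  rw [zeta_div_eq hw1]
  set t := (2:ℝ)^(s.re) with htdef
  have ht0 : 0 < t := Real.rpow_pos_of_pos (by norm_num) _
  have ht : t ≤ 1/2 := by
    have h1 : (2:ℝ)^(s.re) ≤ (2:ℝ)^(-1:ℝ) :=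
      Real.rpow_le_rpow_of_exponent_le (by norm_num) hs
    have h2 : (2:ℝ)^(-1:ℝ) = 1/2 := by
      rw [Real.rpow_neg_one]; norm_num
    rw [htdef]; linarith [h1, h2 ▸ h1]
  have h2x : (2:ℝ)^(-w.re) = t/2 := by
    rw [hwre, show -(1 - s.re) = s.re - 1 by ring, Real.rpow_sub (by norm_num), Real.rpow_one]
  rw [h2x] at hb ha
  have hL2 : ‖LSeries ↗Λ w‖^2 ≤ (1.888 * t)^2 := by
    apply pow_le_pow_left₀ (norm_nonneg _)
    calc ‖LSeries ↗Λ w‖ ≤ 4 * (t/2) * 0.944 := hb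
      _ = 1.888 * t := by ring
  have htot : ‖(LSeries ↗Λ w)^2 + LSeries (LSeries.logMul ↗Λ) w‖
      ≤ (1.888*t)^2 + 4*(t/2)*2.007 := by
    calc ‖(LSeries ↗Λ w)^2 + LSeries (LSeries.logMul ↗Λ) w‖
        ≤ ‖(LSeries ↗Λ w)^2‖ + ‖LSeries (LSeries.logMul ↗Λ) w‖ := norm_add_le _ _
      _ ≤ (1.888*t)^2 + 4*(t/2)*2.007 := by
          rw [norm_pow]
          exact add_le_add hL2 ha
  have hC : (5.796272:ℝ) ≤ 19 / 8 * (Real.log 2) ^ 2 + 13 / 4 * Real.log 2 + 5 / 2 := by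
    have hl := Real.log_two_gt_d9
    have hl2 : (0.6931471803:ℝ)^2 ≤ (Real.log 2)^2 := by
      apply pow_le_pow_left₀ (by norm_num) hl.le
    nlinarith [hl, hl2]
  have hfinal : (1.888*t)^2 + 4*(t/2)*2.007 ≤ t * 5.796272 := by nlinarith [ht0, ht]
  calc ‖(LSeries ↗Λ w)^2 + LSeries (LSeries.logMul ↗Λ) w‖
      ≤ t * 5.796272 := le_trans htot hfinal
    _ ≤ t * (19 / 8 * (Real.log 2) ^ 2 + 13 / 4 * Real.log 2 + 5 / 2) :=
        mul_le_mul_of_nonneg_left hC ht0.le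
end

section
/- There exists σ₂ ≤ −1 such that for all s = σ + it with σ ≤ σ₂ and t ≥ 2, one has |F''(s)/F'(s)| ≥ (1/2)·log(1 − σ). -/
open Complex Real MeasureTheory
open scoped Classical

namespace St17

open Filter Topology Finset

local notation "γ" => Real.eulerMascheroniConstant

noncomputable def gterm (n : ℕ) (w : ℂ) : ℂ :=
  w / ((n : ℂ) + 1) - Complex.log (1 + w / ((n : ℂ) + 1))

noncomputable def pterm (n : ℕ) (w : ℂ) : ℂ := ((n : ℂ) + 1)⁻¹ - ((n : ℂ) + 1 + w)⁻¹

noncomputable def qterm (n : ℕ) (w : ℂ) : ℂ := (((n : ℂ) + 1 + w)⁻¹) ^ 2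

noncomputable def g (w : ℂ) : ℂ :=
  -Complex.log w - (γ : ℂ) * w + ∑' n, gterm n w

noncomputable def ψ (w : ℂ) : ℂ := -w⁻¹ - (γ : ℂ) + ∑' n, pterm n w

noncomputable def ψ₁ (w : ℂ) : ℂ := (w⁻¹) ^ 2 + ∑' n, qterm n w

def U : Set ℂ := {w | 0 < w.re}

lemma isOpen_U : IsOpen U := isOpen_lt continuous_const Complex.continuous_re

lemma preconnected_U : IsPreconnected U :=
  (convex_halfSpace_re_gt 0).isPreconnected

lemma norm_npw {n : ℕ} {w : ℂ} (hw : w ∈ U) : (n + 1 : ℝ) ≤ ‖(n : ℂ) + 1 + w‖ := by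
  have h1 : ((n : ℂ) + 1 + w).re = (n : ℝ) + 1 + w.re := by simp
  have h2 : ((n : ℂ) + 1 + w).re ≤ ‖(n : ℂ) + 1 + w‖ := by
    exact Complex.re_le_norm _
  have hw' : 0 < w.re := hw
  rw [h1] at h2; linarith

lemma npw_ne {n : ℕ} {w : ℂ} (hw : w ∈ U) : (n : ℂ) + 1 + w ≠ 0 := by
  intro h
  have := norm_npw (n := n) hw
  rw [h] at this
  simp at this
  have : (0:ℝ) < (n:ℝ) + 1 := by positivity
  linarith

lemma n1_ne (n : ℕ) : ((n : ℂ) + 1) ≠ 0 := by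
  intro h
  have h2 : ((n : ℂ) + 1).re = 0 := by rw [h]; simp
  simp only [Complex.add_re, Complex.natCast_re, Complex.one_re] at h2
  have : (0:ℝ) ≤ (n:ℝ) := Nat.cast_nonneg n
  linarith

lemma norm_n1 (n : ℕ) : ‖(n : ℂ) + 1‖ = (n : ℝ) + 1 := by
  rw [show ((n : ℂ) + 1) = (((n : ℝ) + 1 : ℝ) : ℂ) by push_cast; ring, Complex.norm_real,
    Real.norm_eq_abs, abs_of_pos (by positivity)]

lemma summable_base : Summable (fun n : ℕ => ((n : ℝ) + 1)⁻¹ ^ 2) := by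
  have h : Summable (fun n : ℕ => 1 / (n : ℝ) ^ 2) :=
    Real.summable_one_div_nat_pow.mpr one_lt_two
  have h2 := (summable_nat_add_iff 1).mpr h
  refine h2.congr fun n => ?_
  push_cast
  rw [one_div, inv_pow]

lemma hasSum_base : HasSum (fun n : ℕ => ((n : ℝ) + 1)⁻¹ ^ 2) (π ^ 2 / 6) := by
  have h := hasSum_zeta_two
  have h1 : HasSum (fun n : ℕ => 1 / ((n + 1 : ℕ) : ℝ) ^ 2) (π ^ 2 / 6) := by
    apply (hasSum_nat_add_iff (f := fun n : ℕ => 1 / (n : ℝ) ^ 2) 1).mpr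
    simpa using h
  have hfe : (fun n : ℕ => ((n : ℝ) + 1)⁻¹ ^ 2) = fun n : ℕ => 1 / ((n + 1 : ℕ) : ℝ) ^ 2 := by
    funext n; push_cast; rw [one_div, inv_pow]
  rw [hfe]; exact h1

lemma tsum_base_le : (∑' n : ℕ, ((n : ℝ) + 1)⁻¹ ^ 2) ≤ 2 := by
  rw [hasSum_base.tsum_eq]
  nlinarith [Real.pi_lt_d2, Real.pi_pos]

lemma norm_pterm_le {n : ℕ} {w : ℂ} (hw : w ∈ U) :
    ‖pterm n w‖ ≤ ‖w‖ * ((n : ℝ) + 1)⁻¹ ^ 2 := by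
  have hne1 := n1_ne n
  have hne2 := npw_ne (n := n) hw
  have heq : pterm n w = w * (((n : ℂ) + 1)⁻¹ * ((n : ℂ) + 1 + w)⁻¹) := by
    unfold pterm; field_simp; ring
  rw [heq, norm_mul, norm_mul, norm_inv, norm_inv, norm_n1]
  have h2 : ‖(n : ℂ) + 1 + w‖⁻¹ ≤ ((n : ℝ) + 1)⁻¹ :=
    inv_anti₀ (by positivity) (norm_npw hw)
  rw [pow_two]
  gcongr

lemma summable_pterm {w : ℂ} (hw : w ∈ U) : Summable (fun n => pterm n w) :=
  Summable.of_norm_bounded (summable_base.mul_left ‖w‖) fun n => norm_pterm_le hw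

lemma norm_qterm_le {n : ℕ} {w : ℂ} (hw : w ∈ U) : ‖qterm n w‖ ≤ ((n : ℝ) + 1)⁻¹ ^ 2 := by
  unfold qterm
  rw [norm_pow, norm_inv]
  have h2 : ‖(n : ℂ) + 1 + w‖⁻¹ ≤ ((n : ℝ) + 1)⁻¹ :=
    inv_anti₀ (by positivity) (norm_npw hw)
  exact pow_le_pow_left₀ (by positivity) h2 2

lemma summable_qterm {w : ℂ} (hw : w ∈ U) : Summable (fun n => qterm n w) :=
  Summable.of_norm_bounded summable_base fun n => norm_qterm_le hw

lemma norm_gterm_le {n : ℕ} {w : ℂ} (hn : 2 * ‖w‖ ≤ (n : ℝ) + 1) :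
    ‖gterm n w‖ ≤ ‖w‖ ^ 2 * ((n : ℝ) + 1)⁻¹ ^ 2 := by
  have hp : (0:ℝ) < (n : ℝ) + 1 := by positivity
  set z := w / ((n : ℂ) + 1) with hz
  have hzn : ‖z‖ ≤ 1 / 2 := by
    rw [hz, norm_div, norm_n1, div_le_div_iff₀ hp two_pos]
    linarith
  have heq : gterm n w = -(Complex.log (1 + z) - z) := by unfold gterm; ring
  rw [heq, norm_neg]
  have hlt : ‖z‖ < 1 := lt_of_le_of_lt hzn (by norm_num)
  have hb := Complex.norm_log_one_add_sub_self_le hlt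
  have h3 : (1 - ‖z‖)⁻¹ ≤ 2 := by
    rw [inv_le_comm₀ (by linarith : (0:ℝ) < 1 - ‖z‖) two_pos]
    linarith
  have h4 : ‖Complex.log (1 + z) - z‖ ≤ ‖z‖ ^ 2 := by
    calc ‖Complex.log (1 + z) - z‖ ≤ ‖z‖ ^ 2 * (1 - ‖z‖)⁻¹ / 2 := hb
    _ ≤ ‖z‖ ^ 2 * 2 / 2 := by gcongr <;> positivity
    _ = ‖z‖ ^ 2 := by ring
  calc ‖Complex.log (1 + z) - z‖ ≤ ‖z‖ ^ 2 := h4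
  _ = ‖w‖ ^ 2 * ((n : ℝ) + 1)⁻¹ ^ 2 := by
      rw [hz, norm_div, norm_n1]; ring

lemma summable_gterm {w : ℂ} (hw : w ∈ U) : Summable (fun n => gterm n w) := by
  apply Summable.of_norm_bounded_eventually (summable_base.mul_left (‖w‖ ^ 2))
  rw [Nat.cofinite_eq_atTop, eventually_atTop]
  refine ⟨⌈2 * ‖w‖⌉₊, fun n hn => ?_⟩
  apply norm_gterm_le
  calc 2 * ‖w‖ ≤ (⌈2 * ‖w‖⌉₊ : ℝ) := Nat.le_ceil _
  _ ≤ (n : ℝ) := by exact_mod_cast hn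
  _ ≤ (n : ℝ) + 1 := by linarith

lemma hasDerivAt_gterm (n : ℕ) {w : ℂ} (hw : w ∈ U) : HasDerivAt (gterm n) (pterm n w) w := by
  have hne1 := n1_ne n
  have hne2 := npw_ne (n := n) hw
  have hwre : 0 < w.re := hw
  have hcast : ((n : ℂ) + 1) = (((n : ℝ) + 1 : ℝ) : ℂ) := by push_cast; ring
  have hre0 : (1 + w / ((n : ℂ) + 1)).re = 1 + w.re / ((n : ℝ) + 1) := by
    rw [hcast, Complex.add_re, Complex.one_re, Complex.div_ofReal_re]
  have hslit : (1 + w / ((n : ℂ) + 1)) ∈ Complex.slitPlane := by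
    rw [Complex.mem_slitPlane_iff]; left; rw [hre0]; positivity
  have h1 : HasDerivAt (fun z : ℂ => z / ((n : ℂ) + 1)) (((n : ℂ) + 1)⁻¹) w := by
    simpa [one_div] using (hasDerivAt_id w).div_const ((n : ℂ) + 1)
  have h2 : HasDerivAt (fun z : ℂ => 1 + z / ((n : ℂ) + 1)) (((n : ℂ) + 1)⁻¹) w :=
    h1.const_add 1
  have h3 := h2.clog hslit
  have h4 := h1.sub h3
  refine h4.congr_deriv ?_
  have hne3 : (1 + w / ((n : ℂ) + 1)) ≠ 0 := Complex.slitPlane_ne_zero hslit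
  unfold pterm
  field_simp

lemma hasDerivAt_pterm (n : ℕ) {w : ℂ} (hw : w ∈ U) : HasDerivAt (pterm n) (qterm n w) w := by
  have hne2 := npw_ne (n := n) hw
  have h1 : HasDerivAt (fun z : ℂ => (n : ℂ) + 1 + z) 1 w := (hasDerivAt_id w).const_add _
  have h2 := h1.inv hne2
  have h3 := h2.const_sub (((n : ℂ) + 1)⁻¹)
  refine h3.congr_deriv ?_
  unfold qterm
  field_simp

lemma ball_subset_U {w : ℂ} (hw : w ∈ U) : Metric.ball w (w.re / 2) ⊆ U := by
  intro z hz
  rw [Metric.mem_ball, Complex.dist_eq] at hz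
  have h1 : |(z - w).re| ≤ ‖z - w‖ := Complex.abs_re_le_norm _
  have h2 : (z - w).re = z.re - w.re := by simp
  have hwre : 0 < w.re := hw
  rw [h2] at h1
  have h3 := abs_le.mp h1
  show 0 < z.re
  have := h3.1
  linarith

lemma hasDerivAt_gsum {w : ℂ} (hw : w ∈ U) :
    HasDerivAt (fun z => ∑' n, gterm n z) (∑' n, pterm n w) w := by
  have hwre : 0 < w.re := hw
  have hrpos : 0 < w.re / 2 := by positivity
  refine hasDerivAt_tsum_of_isPreconnected
    (u := fun n : ℕ => (‖w‖ + w.re / 2) * ((n : ℝ) + 1)⁻¹ ^ 2)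
    (summable_base.mul_left _) Metric.isOpen_ball ((convex_ball w _).isPreconnected)
    (fun n y hy => hasDerivAt_gterm n (ball_subset_U hw hy))
    (fun n y hy => ?_) (Metric.mem_ball_self hrpos) (summable_gterm hw)
    (Metric.mem_ball_self hrpos)
  have hy2 : ‖y‖ ≤ ‖w‖ + w.re / 2 := by
    have hd : dist y w < w.re / 2 := Metric.mem_ball.mp hy
    rw [dist_eq_norm] at hd
    have := norm_sub_norm_le y w
    linarith
  calc ‖pterm n y‖ ≤ ‖y‖ * ((n : ℝ) + 1)⁻¹ ^ 2 := norm_pterm_le (ball_subset_U hw hy)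
  _ ≤ (‖w‖ + w.re / 2) * ((n : ℝ) + 1)⁻¹ ^ 2 := by gcongr

lemma hasDerivAt_psum {w : ℂ} (hw : w ∈ U) :
    HasDerivAt (fun z => ∑' n, pterm n z) (∑' n, qterm n w) w := by
  refine hasDerivAt_tsum_of_isPreconnected
    (u := fun n : ℕ => ((n : ℝ) + 1)⁻¹ ^ 2)
    summable_base isOpen_U preconnected_U
    (fun n y hy => hasDerivAt_pterm n hy)
    (fun n y hy => norm_qterm_le hy) hw (summable_pterm hw) hw

lemma ne_zero_of_U {w : ℂ} (hw : w ∈ U) : w ≠ 0 := by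
  intro h
  have hwre : 0 < w.re := hw
  rw [h] at hwre
  simp at hwre

lemma slit_of_U {w : ℂ} (hw : w ∈ U) : w ∈ Complex.slitPlane := by
  rw [Complex.mem_slitPlane_iff]; left; exact hw

lemma hasDerivAt_g {w : ℂ} (hw : w ∈ U) : HasDerivAt g (ψ w) w := by
  have h1 := (Complex.hasDerivAt_log (slit_of_U hw)).neg
  have h2 : HasDerivAt (fun z : ℂ => (γ : ℂ) * z) (γ : ℂ) w := by
    simpa using (hasDerivAt_id w).const_mul (γ : ℂ)
  have h3 := (h1.sub h2).add (hasDerivAt_gsum hw)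
  exact h3

lemma hasDerivAt_ψ {w : ℂ} (hw : w ∈ U) : HasDerivAt ψ (ψ₁ w) w := by
  have hw0 := ne_zero_of_U hw
  have h1 := ((hasDerivAt_id w).inv hw0).neg
  have h2 := (h1.sub_const ((γ : ℂ))).add (hasDerivAt_psum hw)
  refine h2.congr_deriv ?_
  unfold ψ₁
  simp only [id]
  field_simp

lemma one_add_div_eq {n : ℕ} (w : ℂ) :
    1 + w / ((n : ℂ) + 1) = ((n : ℂ) + 1 + w) * ((n : ℂ) + 1)⁻¹ := by
  have h := n1_ne n
  field_simp

lemma exp_g {w : ℂ} (hw : w ∈ U) : Complex.exp (g w) = Complex.Gamma w := by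
  have hw0 := ne_zero_of_U hw
  have hsum := (summable_gterm hw).hasSum.tendsto_sum_nat
  have h1 : Tendsto
      (fun N => Complex.exp (-Complex.log w - (γ : ℂ) * w + ∑ n ∈ range N, gterm n w))
      atTop (𝓝 (Complex.exp (g w))) := by
    unfold g
    exact (Complex.continuous_exp.tendsto _).comp (tendsto_const_nhds.add hsum)
  have key : ∀ N : ℕ, 1 ≤ N →
      Complex.exp (-Complex.log w - (γ : ℂ) * w + ∑ n ∈ range N, gterm n w) =
        Complex.GammaSeq w N *
          Complex.exp ((((harmonic N : ℝ) - Real.log N - γ : ℝ) : ℂ) * w) := by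
    intro N hN
    have hNne : (N : ℂ) ≠ 0 := by
      exact_mod_cast Nat.cast_ne_zero.mpr (by omega)
    set P := ∏ n ∈ range N, ((n : ℂ) + 1 + w) with hP
    have hPne : P ≠ 0 := Finset.prod_ne_zero_iff.mpr fun n _ => npw_ne (n := n) hw
    have hharm : ((harmonic N : ℝ) : ℂ) = ∑ n ∈ range N, ((n : ℂ) + 1)⁻¹ := by
      rw [harmonic]
      push_cast
      try rfl
    have hfact : (∏ n ∈ range N, ((n : ℂ) + 1)) = (Nat.factorial N : ℂ) := by
      rw [← Finset.prod_range_add_one_eq_factorial]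
      push_cast
      try rfl
    have hfne : (Nat.factorial N : ℂ) ≠ 0 := by
      exact_mod_cast Nat.cast_ne_zero.mpr (Nat.factorial_ne_zero N)
    have e1 : Complex.exp (∑ n ∈ range N, gterm n w) =
        Complex.exp (((harmonic N : ℝ) : ℂ) * w) * ((Nat.factorial N : ℂ) * P⁻¹) := by
      rw [Complex.exp_sum]
      have hterm : ∀ n ∈ range N, Complex.exp (gterm n w) =
          Complex.exp (w / ((n : ℂ) + 1)) * (((n : ℂ) + 1) * ((n : ℂ) + 1 + w)⁻¹) := by
        intro n _
        have hne3 : (1 + w / ((n : ℂ) + 1)) ≠ 0 := by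
          rw [one_add_div_eq]
          exact mul_ne_zero (npw_ne hw) (inv_ne_zero (n1_ne n))
        unfold gterm
        rw [Complex.exp_sub, Complex.exp_log hne3, one_add_div_eq,
          div_eq_mul_inv, mul_inv, inv_inv]
        ring
      rw [Finset.prod_congr rfl hterm, Finset.prod_mul_distrib, ← Complex.exp_sum,
        Finset.prod_mul_distrib, hfact, ← Finset.prod_inv_distrib]
      congr 2
      rw [hharm, Finset.sum_mul]
      apply Finset.sum_congr rfl
      intro n _
      rw [div_eq_mul_inv, mul_comm]
    have hden : (∏ j ∈ range (N + 1), (w + (j : ℂ))) = w * P := by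
      rw [Finset.prod_range_succ']
      simp only [Nat.cast_zero, add_zero]
      rw [mul_comm, hP]
      congr 1
      apply Finset.prod_congr rfl
      intro n _
      push_cast
      ring
    have hcpow : (N : ℂ) ^ w = Complex.exp ((Real.log N : ℂ) * w) := by
      rw [Complex.cpow_def_of_ne_zero hNne]
      congr 2
      rw [← Complex.ofReal_natCast, Complex.ofReal_log (Nat.cast_nonneg N)]
    have hgs : Complex.GammaSeq w N = Complex.exp ((Real.log N : ℂ) * w) * (Nat.factorial N : ℂ) / (w * P) := by
      rw [Complex.GammaSeq, hden, hcpow]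
    rw [hgs, Complex.exp_add, Complex.exp_sub, Complex.exp_neg, Complex.exp_log hw0, e1]
    have hexp3 : Complex.exp ((((harmonic N : ℝ) - Real.log N - γ : ℝ) : ℂ) * w) =
        Complex.exp (((harmonic N : ℝ) : ℂ) * w) / Complex.exp ((Real.log N : ℂ) * w) /
          Complex.exp ((γ : ℂ) * w) := by
      rw [← Complex.exp_sub, ← Complex.exp_sub]
      congr 1
      push_cast
      ring
    rw [hexp3]
    field_simp [Complex.exp_ne_zero]
  have ht0 : Tendsto (fun N : ℕ => (harmonic N : ℝ) - Real.log N - γ) atTop (𝓝 0) := by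
    have h := Real.tendsto_harmonic_sub_log.sub_const γ
    simpa using h
  have ht1 : Tendsto (fun N : ℕ => (((harmonic N : ℝ) - Real.log N - γ : ℝ) : ℂ) * w)
      atTop (𝓝 0) := by
    have hc : Continuous fun x : ℝ => (x : ℂ) * w := by continuity
    have hcomp := (hc.tendsto 0).comp ht0
    simp only [Function.comp_def] at hcomp
    have hz : ((0 : ℝ) : ℂ) * w = 0 := by simp
    rwa [hz] at hcomp
  have ht2 : Tendsto (fun N : ℕ =>
      Complex.exp ((((harmonic N : ℝ) - Real.log N - γ : ℝ) : ℂ) * w)) atTop (𝓝 1) := by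
    have hcomp := (Complex.continuous_exp.tendsto 0).comp ht1
    simp only [Function.comp_def] at hcomp
    rwa [Complex.exp_zero] at hcomp
  have h2 : Tendsto (fun N => Complex.GammaSeq w N *
      Complex.exp ((((harmonic N : ℝ) - Real.log N - γ : ℝ) : ℂ) * w)) atTop
      (𝓝 (Complex.Gamma w * 1)) := (Complex.GammaSeq_tendsto_Gamma w).mul ht2
  have heq : (fun N : ℕ => Complex.exp (-Complex.log w - (γ : ℂ) * w + ∑ n ∈ range N, gterm n w))
      =ᶠ[atTop] fun N => Complex.GammaSeq w N *
        Complex.exp ((((harmonic N : ℝ) - Real.log N - γ : ℝ) : ℂ) * w) := by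
    filter_upwards [eventually_ge_atTop 1] with N hN using key N hN
  have := tendsto_nhds_unique (h1.congr' heq) h2
  rw [this, mul_one]

lemma hasDerivAt_Gamma {w : ℂ} (hw : w ∈ U) :
    HasDerivAt Complex.Gamma (ψ w * Complex.Gamma w) w := by
  have h := (hasDerivAt_g hw).cexp
  have heq : (fun z => Complex.exp (g z)) =ᶠ[𝓝 w] Complex.Gamma :=
    (isOpen_U.eventually_mem hw).mono fun z hz => exp_g hz
  have h2 := h.congr_of_eventuallyEq heq.symm
  rw [exp_g hw] at h2
  refine h2.congr_deriv ?_
  ring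

lemma re_ψ_ge {w : ℂ} (hw : 2 ≤ w.re) : Real.log w.re - 3 ≤ (ψ w).re := by
  have hwU : w ∈ U := by show 0 < w.re; linarith
  have hx0 : (0:ℝ) < w.re := by linarith
  set x := w.re with hxdef
  set N := ⌊x⌋₊ with hN
  -- re of pterm
  have hre_p : ∀ n : ℕ, (pterm n w).re =
      ((n : ℝ) + 1)⁻¹ - ((n : ℂ) + 1 + w).re / Complex.normSq ((n : ℂ) + 1 + w) := by
    intro n
    unfold pterm
    rw [Complex.sub_re, Complex.inv_re, Complex.inv_re]
    congr 1
    have : ((n : ℂ) + 1).re = (n : ℝ) + 1 := by simp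
    rw [this]
    have hnq : Complex.normSq ((n : ℂ) + 1) = ((n : ℝ) + 1) ^ 2 := by
      rw [show ((n : ℂ) + 1) = (((n : ℝ) + 1 : ℝ) : ℂ) by push_cast; ring, Complex.normSq_ofReal]
      ring
    rw [hnq]
    field_simp
  have hre_bound : ∀ n : ℕ, ((n : ℝ) + 1)⁻¹ - ((n : ℝ) + 1 + x)⁻¹ ≤ (pterm n w).re := by
    intro n
    rw [hre_p n]
    have hre : ((n : ℂ) + 1 + w).re = (n : ℝ) + 1 + x := by simp [hxdef]
    have hn1x : (0:ℝ) < (n : ℝ) + 1 + x := by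
      have := Nat.cast_nonneg (α := ℝ) n
      linarith
    have hsq : ((n : ℝ) + 1 + x) ^ 2 ≤ Complex.normSq ((n : ℂ) + 1 + w) := by
      rw [Complex.normSq_apply, hre]
      nlinarith [sq_nonneg (((n : ℂ) + 1 + w).im)]
    have hns0 : (0:ℝ) < Complex.normSq ((n : ℂ) + 1 + w) := by nlinarith
    have hq : ((n : ℂ) + 1 + w).re / Complex.normSq ((n : ℂ) + 1 + w) ≤ ((n : ℝ) + 1 + x)⁻¹ := by
      rw [hre, inv_eq_one_div, div_le_div_iff₀ hns0 hn1x]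
      nlinarith
    linarith
  have hterm_nonneg : ∀ n : ℕ, 0 ≤ (pterm n w).re := by
    intro n
    have h1 := hre_bound n
    have h2 : ((n : ℝ) + 1 + x)⁻¹ ≤ ((n : ℝ) + 1)⁻¹ :=
      inv_anti₀ (by positivity) (by linarith)
    linarith
  have hsumre : Summable (fun n => (pterm n w).re) :=
    (Complex.hasSum_re (summable_pterm hwU).hasSum).summable
  have htsum_ge : ∑ n ∈ range N, ((pterm n w).re) ≤ ∑' n, (pterm n w).re :=
    Summable.sum_le_tsum (range N) (fun n _ => hterm_nonneg n) hsumre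
  have hfin : (harmonic N : ℝ) - 1 ≤ ∑ n ∈ range N, ((pterm n w).re) := by
    have hhar : (harmonic N : ℝ) = ∑ n ∈ range N, ((n : ℝ) + 1)⁻¹ := by
      rw [harmonic]; push_cast; rfl
    have h1 : ∑ n ∈ range N, (((n : ℝ) + 1)⁻¹ - ((n : ℝ) + 1 + x)⁻¹) ≤
        ∑ n ∈ range N, ((pterm n w).re) :=
      Finset.sum_le_sum fun n _ => hre_bound n
    have h2 : ∑ n ∈ range N, (((n : ℝ) + 1)⁻¹ - ((n : ℝ) + 1 + x)⁻¹) =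
        (harmonic N : ℝ) - ∑ n ∈ range N, ((n : ℝ) + 1 + x)⁻¹ := by
      rw [Finset.sum_sub_distrib, hhar]
    have h3 : ∑ n ∈ range N, ((n : ℝ) + 1 + x)⁻¹ ≤ 1 := by
      have hNx : (N : ℝ) ≤ x := Nat.floor_le hx0.le
      calc ∑ n ∈ range N, ((n : ℝ) + 1 + x)⁻¹ ≤ ∑ n ∈ range N, x⁻¹ := by
            apply Finset.sum_le_sum
            intro n _
            refine inv_anti₀ hx0 ?_
            have := Nat.cast_nonneg (α := ℝ) n
            linarith
      _ = N * x⁻¹ := by rw [Finset.sum_const, Finset.card_range, nsmul_eq_mul]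
      _ ≤ x * x⁻¹ := mul_le_mul_of_nonneg_right hNx (by positivity)
      _ = 1 := mul_inv_cancel₀ (ne_of_gt hx0)
    linarith
  have hlogN : Real.log x ≤ (harmonic N : ℝ) := log_le_harmonic_floor x hx0.le
  have hrepsi : (ψ w).re = -(w⁻¹).re - γ + ∑' n, (pterm n w).re := by
    unfold ψ
    rw [Complex.add_re, Complex.sub_re, Complex.neg_re, Complex.re_tsum (summable_pterm hwU)]
    simp
  have hinv : (w⁻¹).re ≤ 1 := by
    rw [Complex.inv_re]
    have hns : x ^ 2 ≤ Complex.normSq w := by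
      rw [Complex.normSq_apply]; nlinarith [sq_nonneg w.im]
    have hns0 : (0:ℝ) < Complex.normSq w := by nlinarith
    rw [div_le_one hns0]
    nlinarith
  have hγ : γ ≤ 1 := by
    have := Real.eulerMascheroniConstant_lt_two_thirds
    linarith
  rw [hrepsi]
  have : Real.log x - 1 ≤ ∑' n, (pterm n w).re := by linarith
  linarith

lemma norm_ψ₁_le {w : ℂ} (hw : 2 ≤ w.re) : ‖ψ₁ w‖ ≤ 3 := by
  have hwU : w ∈ U := by show 0 < w.re; linarith
  have hnw : 2 ≤ ‖w‖ := by
    calc (2:ℝ) ≤ w.re := hw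
    _ ≤ ‖w‖ := by exact Complex.re_le_norm w
  have h1 : ‖(w⁻¹) ^ 2‖ ≤ 1 := by
    rw [norm_pow, norm_inv]
    have hi : ‖w‖⁻¹ ≤ 2⁻¹ := inv_anti₀ (by norm_num) hnw
    have hi0 : (0:ℝ) ≤ ‖w‖⁻¹ := by positivity
    nlinarith
  have h2 : ‖∑' n, qterm n w‖ ≤ 2 := by
    calc ‖∑' n, qterm n w‖ ≤ ∑' n : ℕ, ((n : ℝ) + 1)⁻¹ ^ 2 :=
          tsum_of_norm_bounded summable_base.hasSum fun n => norm_qterm_le hwU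
    _ ≤ 2 := tsum_base_le
  unfold ψ₁
  calc ‖(w⁻¹) ^ 2 + ∑' n, qterm n w‖ ≤ ‖(w⁻¹) ^ 2‖ + ‖∑' n, qterm n w‖ := norm_add_le _ _
  _ ≤ 3 := by linarith

lemma re_neg_mul_I (z : ℂ) : (-z * Complex.I).re = z.im := by
  simp

lemma re_mul_I (z : ℂ) : (z * Complex.I).re = -z.im := by
  simp

lemma exp_mul_I_norm (z : ℂ) : ‖Complex.exp (z * Complex.I)‖ = Real.exp (-z.im) := by
  rw [Complex.norm_exp, re_mul_I]

lemma exp_neg_mul_I_norm (z : ℂ) : ‖Complex.exp (-z * Complex.I)‖ = Real.exp z.im := by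
  rw [Complex.norm_exp, re_neg_mul_I]

lemma sin_norm_eq (z : ℂ) :
    ‖Complex.sin z‖ = ‖Complex.exp (-z * Complex.I) - Complex.exp (z * Complex.I)‖ / 2 := by
  rw [Complex.sin, norm_div, norm_mul, Complex.norm_I, mul_one,
    Complex.norm_two]

lemma sin_norm_ge (z : ℂ) :
    (Real.exp z.im - Real.exp (-z.im)) / 2 ≤ ‖Complex.sin z‖ := by
  rw [sin_norm_eq]
  have h := norm_sub_norm_le (Complex.exp (-z * Complex.I)) (Complex.exp (z * Complex.I))
  rw [exp_neg_mul_I_norm z, exp_mul_I_norm z] at h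
  linarith

lemma cos_norm_le (z : ℂ) :
    ‖Complex.cos z‖ ≤ (Real.exp z.im + Real.exp (-z.im)) / 2 := by
  rw [Complex.cos, norm_div, Complex.norm_two]
  have h := norm_add_le (Complex.exp (z * Complex.I)) (Complex.exp (-z * Complex.I))
  rw [exp_neg_mul_I_norm z, exp_mul_I_norm z] at h
  linarith

def Ω : Set ℂ := {s | s.re < -1 ∧ 1 < s.im}

lemma isOpen_Ω : IsOpen Ω :=
  (isOpen_lt Complex.continuous_re continuous_const).inter
    (isOpen_lt continuous_const Complex.continuous_im)

lemma mem_U_of_Ω {s : ℂ} (hs : s ∈ Ω) : (1 - s) ∈ U := by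
  have h1 : s.re < -1 := hs.1
  show 0 < (1 - s).re
  simp only [Complex.sub_re, Complex.one_re]
  linarith

noncomputable def Lf (s : ℂ) : ℂ :=
  Complex.log 2 + Complex.log (π : ℂ) +
    (π : ℂ) / 2 * (Complex.cos ((π : ℂ) * s / 2) / Complex.sin ((π : ℂ) * s / 2)) - ψ (1 - s)

noncomputable def L1 (s : ℂ) : ℂ :=
  -((π : ℂ) / 2) ^ 2 * ((Complex.sin ((π : ℂ) * s / 2)) ^ 2)⁻¹ + ψ₁ (1 - s)

lemma im_pi_mul (s : ℂ) : ((π : ℂ) * s / 2).im = π * s.im / 2 := by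
  simp [Complex.div_im, Complex.mul_im]

lemma sin_norm_ge' {s : ℂ} (hs : 1 < s.im) :
    (Real.exp (π * s.im / 2) - Real.exp (-(π * s.im / 2))) / 2 ≤
      ‖Complex.sin ((π : ℂ) * s / 2)‖ := by
  have h := sin_norm_ge ((π : ℂ) * s / 2)
  rwa [im_pi_mul] at h

lemma sin_ne {s : ℂ} (hs : 1 < s.im) : Complex.sin ((π : ℂ) * s / 2) ≠ 0 := by
  have h := sin_norm_ge' hs
  have hm : 0 < π * s.im / 2 := by nlinarith [Real.pi_pos]
  have hlt : Real.exp (-(π * s.im / 2)) < Real.exp (π * s.im / 2) :=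
    Real.exp_lt_exp.mpr (by linarith)
  intro h0
  rw [h0] at h
  simp only [norm_zero] at h
  linarith

lemma Gamma_arg_ne {s : ℂ} (hs : s ∈ Ω) : ∀ m : ℕ, 1 - s ≠ -(m : ℂ) := by
  intro m h
  have him := congrArg Complex.im h
  simp only [Complex.sub_im, Complex.one_im, Complex.neg_im, Complex.natCast_im] at him
  have : 1 < s.im := hs.2
  simp at him
  linarith

lemma F_ne {s : ℂ} (hs : s ∈ Ω) : F s ≠ 0 := by
  have h1 : (2 : ℂ) ^ s ≠ 0 := by
    rw [Complex.cpow_def_of_ne_zero two_ne_zero]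
    exact Complex.exp_ne_zero _
  have h2 : ((π : ℝ) : ℂ) ^ (s - 1) ≠ 0 := by
    rw [Complex.cpow_def_of_ne_zero (by exact_mod_cast Real.pi_ne_zero)]
    exact Complex.exp_ne_zero _
  have h3 := sin_ne hs.2
  have h4 : Complex.Gamma (1 - s) ≠ 0 := Complex.Gamma_ne_zero (Gamma_arg_ne hs)
  unfold F
  exact mul_ne_zero (mul_ne_zero (mul_ne_zero h1 h2) h3) h4

lemma hasDerivAt_F {s : ℂ} (hs : s ∈ Ω) : HasDerivAt F (Lf s * F s) s := by
  have hsin := sin_ne hs.2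
  have hU := mem_U_of_Ω hs
  have hπne : ((π : ℝ) : ℂ) ≠ 0 := by exact_mod_cast Real.pi_ne_zero
  have hA : HasDerivAt (fun z : ℂ => (2 : ℂ) ^ z) ((2 : ℂ) ^ s * Complex.log 2) s :=
    (hasStrictDerivAt_const_cpow (Or.inl two_ne_zero)).hasDerivAt
  have hB : HasDerivAt (fun z : ℂ => ((π : ℝ) : ℂ) ^ (z - 1))
      (((π : ℝ) : ℂ) ^ (s - 1) * Complex.log ((π : ℝ) : ℂ)) s := by
    have hinner : HasDerivAt (fun z : ℂ => z - 1) 1 s := (hasDerivAt_id s).sub_const 1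
    have := ((hasStrictDerivAt_const_cpow (Or.inl hπne)).hasDerivAt).comp s hinner
    exact this.congr_deriv (mul_one _)
  have hinner2 : HasDerivAt (fun z : ℂ => (π : ℂ) * z / 2) ((π : ℂ) / 2) s := by
    simpa using ((hasDerivAt_id s).const_mul ((π : ℂ))).div_const 2
  have hC : HasDerivAt (fun z : ℂ => Complex.sin ((π : ℂ) * z / 2))
      (Complex.cos ((π : ℂ) * s / 2) * ((π : ℂ) / 2)) s :=
    (Complex.hasDerivAt_sin _).comp s hinner2
  have hD : HasDerivAt (fun z : ℂ => Complex.Gamma (1 - z))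
      (ψ (1 - s) * Complex.Gamma (1 - s) * (-1)) s := by
    have hinner : HasDerivAt (fun z : ℂ => 1 - z) (-1) s := by
      exact ((hasDerivAt_const s (1 : ℂ)).sub (hasDerivAt_id s)).congr_deriv (zero_sub 1)
    exact (hasDerivAt_Gamma hU).comp s hinner
  have hF := ((hA.mul hB).mul hC).mul hD
  have hgoal : HasDerivAt (fun z : ℂ => (2 : ℂ) ^ z * ((π : ℝ) : ℂ) ^ (z - 1) *
      Complex.sin ((π : ℂ) * z / 2) * Complex.Gamma (1 - z)) (Lf s * F s) s := by
    refine hF.congr_deriv ?_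
    unfold Lf F
    simp only [Pi.mul_apply]
    set S := Complex.sin ((π : ℂ) * s / 2) with hS
    field_simp
    ring
  exact hgoal

lemma hasDerivAt_Lf {s : ℂ} (hs : s ∈ Ω) : HasDerivAt Lf (L1 s) s := by
  have hsin := sin_ne hs.2
  have hU := mem_U_of_Ω hs
  have hinner2 : HasDerivAt (fun z : ℂ => (π : ℂ) * z / 2) ((π : ℂ) / 2) s := by
    simpa using ((hasDerivAt_id s).const_mul ((π : ℂ))).div_const 2
  have hCsin : HasDerivAt (fun z : ℂ => Complex.sin ((π : ℂ) * z / 2))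
      (Complex.cos ((π : ℂ) * s / 2) * ((π : ℂ) / 2)) s :=
    (Complex.hasDerivAt_sin _).comp s hinner2
  have hCcos : HasDerivAt (fun z : ℂ => Complex.cos ((π : ℂ) * z / 2))
      (-Complex.sin ((π : ℂ) * s / 2) * ((π : ℂ) / 2)) s := by
    have := (Complex.hasDerivAt_cos ((π : ℂ) * s / 2)).comp s hinner2
    exact this
  have hquot := hCcos.div hCsin hsin
  have hψd : HasDerivAt (fun z : ℂ => ψ (1 - z)) (-ψ₁ (1 - s)) s := by
    have hinner : HasDerivAt (fun z : ℂ => 1 - z) (-1) s := by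
      exact ((hasDerivAt_const s (1 : ℂ)).sub (hasDerivAt_id s)).congr_deriv (zero_sub 1)
    have := (hasDerivAt_ψ hU).comp s hinner
    exact this.congr_deriv (by ring)
  have h := ((hquot.const_mul ((π : ℂ) / 2)).const_add
    (Complex.log 2 + Complex.log ((π : ℝ) : ℂ))).sub hψd
  refine h.congr_deriv ?_
  unfold L1
  have hpy := Complex.sin_sq_add_cos_sq ((π : ℂ) * s / 2)
  set S := Complex.sin ((π : ℂ) * s / 2) with hS
  set C := Complex.cos ((π : ℂ) * s / 2) with hC
  have hnum : (-S * ((π : ℂ) / 2) * S - C * (C * ((π : ℂ) / 2))) =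
      -((π : ℂ) / 2) * (S ^ 2 + C ^ 2) := by ring
  rw [hnum, hpy, mul_one, div_eq_mul_inv]
  ring


lemma cot_norm_le {s : ℂ} (hs : 2 ≤ s.im) :
    ‖Complex.cos ((π : ℂ) * s / 2) / Complex.sin ((π : ℂ) * s / 2)‖ ≤ 4 / 3 := by
  have hm : 3 ≤ π * s.im / 2 := by nlinarith [Real.pi_gt_three]
  set m := π * s.im / 2 with hmdef
  have hsin := sin_norm_ge' (s := s) (by linarith)
  have hcos := cos_norm_le ((π : ℂ) * s / 2)
  rw [im_pi_mul] at hcos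
  set E := Real.exp m with hE
  set e := Real.exp (-m) with he
  have hEpos : 0 < E := Real.exp_pos m
  have hepos : 0 < e := Real.exp_pos (-m)
  have hEe : E * e = 1 := by
    rw [hE, he, ← Real.exp_add]
    simp
  have hE7 : 7 ≤ E ^ 2 := by
    have h2m : 2 * m + 1 ≤ Real.exp (2 * m) := Real.add_one_le_exp (2 * m)
    have h2 : Real.exp (2 * m) = E ^ 2 := by
      rw [two_mul, Real.exp_add, hE, sq]
    linarith [h2 ▸ h2m]
  have hSpos : 0 < (E - e) / 2 := by nlinarith
  rw [norm_div]
  calc ‖Complex.cos ((π : ℂ) * s / 2)‖ / ‖Complex.sin ((π : ℂ) * s / 2)‖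
      ≤ ((E + e) / 2) / ((E - e) / 2) := by
        apply div_le_div₀ (by positivity) hcos hSpos hsin
  _ ≤ 4 / 3 := by
        rw [div_le_div_iff₀ hSpos (by norm_num)]
        nlinarith

lemma sin_norm_lb {s : ℂ} (hs : 2 ≤ s.im) :
    (3 : ℝ) / 2 ≤ ‖Complex.sin ((π : ℂ) * s / 2)‖ := by
  have hm : 3 ≤ π * s.im / 2 := by nlinarith [Real.pi_gt_three]
  have hsin := sin_norm_ge' (s := s) (by linarith)
  have hE : π * s.im / 2 + 1 ≤ Real.exp (π * s.im / 2) := Real.add_one_le_exp _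
  have he : Real.exp (-(π * s.im / 2)) ≤ 1 := Real.exp_le_one_iff.mpr (by linarith)
  linarith

lemma inv_sin_sq_norm_le {s : ℂ} (hs : 2 ≤ s.im) :
    ‖((Complex.sin ((π : ℂ) * s / 2)) ^ 2)⁻¹‖ ≤ 1 / 2 := by
  have hlb := sin_norm_lb hs
  rw [norm_inv, norm_pow]
  have h1 : (2 : ℝ) ≤ ‖Complex.sin ((π : ℂ) * s / 2)‖ ^ 2 := by nlinarith
  have h2 : (0 : ℝ) < ‖Complex.sin ((π : ℂ) * s / 2)‖ ^ 2 := by linarith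
  have h3 : (‖Complex.sin ((π : ℂ) * s / 2)‖ ^ 2)⁻¹ ≤ 2⁻¹ := inv_anti₀ (by norm_num) h1
  linarith

lemma norm_pi_half : ‖((π : ℝ) : ℂ) / 2‖ = π / 2 := by
  rw [norm_div, Complex.norm_real, Real.norm_eq_abs, abs_of_pos Real.pi_pos,
    Complex.norm_two]

lemma Lf_re_le {s : ℂ} (hs : s.re ≤ -1) (him : 2 ≤ s.im) :
    (Lf s).re ≤ -(Real.log (1 - s.re) - 9) := by
  have h1 : (Complex.log 2).re ≤ 1 := by
    rw [Complex.log_re, Complex.norm_two]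
    linarith [Real.log_le_sub_one_of_pos (by norm_num : (0:ℝ) < 2)]
  have h2 : (Complex.log ((π : ℝ) : ℂ)).re ≤ 2.15 := by
    rw [Complex.log_re, Complex.norm_real, Real.norm_eq_abs, abs_of_pos Real.pi_pos]
    nlinarith [Real.log_le_sub_one_of_pos Real.pi_pos, Real.pi_lt_d2]
  have h3 : (((π : ℝ) : ℂ) / 2 *
      (Complex.cos ((π : ℂ) * s / 2) / Complex.sin ((π : ℂ) * s / 2))).re ≤ 2.1 := by
    have hn : ‖((π : ℝ) : ℂ) / 2 *
        (Complex.cos ((π : ℂ) * s / 2) / Complex.sin ((π : ℂ) * s / 2))‖ ≤ 2.1 := by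
      rw [norm_mul, norm_pi_half]
      calc π / 2 * ‖Complex.cos ((π : ℂ) * s / 2) / Complex.sin ((π : ℂ) * s / 2)‖
          ≤ π / 2 * (4 / 3) := by
            apply mul_le_mul_of_nonneg_left (cot_norm_le him) (by positivity)
      _ ≤ 2.1 := by nlinarith [Real.pi_lt_d2]
    calc (((π : ℝ) : ℂ) / 2 *
        (Complex.cos ((π : ℂ) * s / 2) / Complex.sin ((π : ℂ) * s / 2))).re
        ≤ ‖_‖ := by exact Complex.re_le_norm _
    _ ≤ 2.1 := hn
  have h4 : Real.log (1 - s.re) - 3 ≤ (ψ (1 - s)).re := by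
    have hw2 : 2 ≤ (1 - s).re := by
      simp only [Complex.sub_re, Complex.one_re]
      linarith
    have := re_ψ_ge hw2
    rwa [show (1 - s).re = 1 - s.re by simp] at this
  unfold Lf
  rw [Complex.sub_re, Complex.add_re, Complex.add_re]
  linarith

lemma L1_norm_le {s : ℂ} (hs : s.re ≤ -1) (him : 2 ≤ s.im) : ‖L1 s‖ ≤ 5 := by
  have hψ1 : ‖ψ₁ (1 - s)‖ ≤ 3 := by
    apply norm_ψ₁_le
    simp only [Complex.sub_re, Complex.one_re]
    linarith
  have hterm : ‖-(((π : ℝ) : ℂ) / 2) ^ 2 * ((Complex.sin ((π : ℂ) * s / 2)) ^ 2)⁻¹‖ ≤ 2 := by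
    rw [norm_mul, norm_neg, norm_pow, norm_pi_half]
    calc (π / 2) ^ 2 * ‖((Complex.sin ((π : ℂ) * s / 2)) ^ 2)⁻¹‖
        ≤ (π / 2) ^ 2 * (1 / 2) := by
          apply mul_le_mul_of_nonneg_left (inv_sin_sq_norm_le him) (by positivity)
    _ ≤ 2 := by nlinarith [Real.pi_lt_d2, Real.pi_pos]
  unfold L1
  calc ‖-(((π : ℝ) : ℂ) / 2) ^ 2 * ((Complex.sin ((π : ℂ) * s / 2)) ^ 2)⁻¹ + ψ₁ (1 - s)‖
      ≤ ‖-(((π : ℝ) : ℂ) / 2) ^ 2 * ((Complex.sin ((π : ℂ) * s / 2)) ^ 2)⁻¹‖ + ‖ψ₁ (1 - s)‖ :=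
        norm_add_le _ _
  _ ≤ 5 := by linarith

end St17

/-- There exists `σ₂ ≤ -1` such that for all `s = σ + it` with
`σ ≤ σ₂` and `t ≥ 2`, `|F''(s)/F'(s)| ≥ (1/2) log (1 - σ)`. -/
theorem statement17 :
    ∃ σ₂ : ℝ, σ₂ ≤ -1 ∧ ∀ s : ℂ, s.re ≤ σ₂ → 2 ≤ s.im →
      1 / 2 * Real.log (1 - s.re) ≤ ‖iteratedDeriv 2 F s / deriv F s‖ := by
  have hexp1 : (31 : ℝ) ≤ Real.exp 30 := by linarith [Real.add_one_le_exp (30 : ℝ)]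
  refine ⟨-Real.exp 30, by linarith, ?_⟩
  intro s hre him
  have hsre : s.re ≤ -1 := le_trans hre (by linarith)
  have hs : s ∈ St17.Ω := ⟨by linarith, by linarith⟩
  have hx30 : 30 ≤ Real.log (1 - s.re) := by
    rw [show (30 : ℝ) = Real.log (Real.exp 30) from (Real.log_exp 30).symm]
    apply Real.log_le_log (Real.exp_pos 30)
    linarith
  set x := Real.log (1 - s.re) with hxdef
  have hLre := St17.Lf_re_le hsre him
  have hL1 := St17.L1_norm_le hsre him
  have hLnorm : x - 9 ≤ ‖St17.Lf s‖ := by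
    have h1 : -(St17.Lf s).re ≤ |(St17.Lf s).re| := neg_le_abs _
    have h2 : |(St17.Lf s).re| ≤ ‖St17.Lf s‖ := by
      exact Complex.abs_re_le_norm _
    linarith
  have hLpos : 0 < ‖St17.Lf s‖ := by linarith
  have hLne : St17.Lf s ≠ 0 := by
    intro h
    rw [h, norm_zero] at hLpos
    exact lt_irrefl 0 hLpos
  have hF := St17.hasDerivAt_F hs
  have hF0 := St17.F_ne hs
  have hL := St17.hasDerivAt_Lf hs
  have hev : deriv F =ᶠ[nhds s] fun z => St17.Lf z * F z := by
    filter_upwards [St17.isOpen_Ω.eventually_mem hs] with z hz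
    exact (St17.hasDerivAt_F hz).deriv
  have hderiv1 : deriv F s = St17.Lf s * F s := hF.deriv
  have hderiv2 : iteratedDeriv 2 F s = St17.L1 s * F s + St17.Lf s * (St17.Lf s * F s) := by
    rw [show (2 : ℕ) = 1 + 1 from rfl, iteratedDeriv_succ, iteratedDeriv_one]
    rw [hev.deriv_eq]
    exact (hL.mul hF).deriv
  have hq : iteratedDeriv 2 F s / deriv F s = St17.Lf s + St17.L1 s / St17.Lf s := by
    rw [hderiv2, hderiv1]
    field_simp
    ring
  rw [hq]
  have hdiv : ‖St17.L1 s / St17.Lf s‖ ≤ 5 / 21 := by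
    rw [norm_div]
    apply div_le_div₀ (by norm_num) hL1 (by norm_num)
    linarith
  have htri : ‖St17.Lf s‖ ≤ ‖St17.Lf s + St17.L1 s / St17.Lf s‖ + ‖St17.L1 s / St17.Lf s‖ := by
    have h := norm_add_le (St17.Lf s + St17.L1 s / St17.Lf s) (-(St17.L1 s / St17.Lf s))
    simpa using h
  calc 1 / 2 * x ≤ (x - 9) - 5 / 21 := by linarith
  _ ≤ ‖St17.Lf s + St17.L1 s / St17.Lf s‖ := by linarith
end
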